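/- arXiv:1005.4640 — 6 statements merged into one kernel-verified Lean document; each statement's English description precedes it below -/
import Mathlib

section
/- For every positive integer a and every positive integer n, d_a(n²)·d(n) ≤ d_{2a+2}(n)², where d = d_2 is the ordinary divisor-counting function. -/
/-- `dNat k n` is the number of ordered `k`-tuples of positive integers whose product is `n`. -/
noncomputable def dNat (k n : ℕ) : ℕ :=
  Nat.card {f : Fin k → ℕ // (∀ i, 0 < f i) ∧ ∏ i, f i = n}

namespace DNatAux

lemma dNat_zero (n : ℕ) : dNat 0 n = if n = 1 then 1 else 0 := by
  unfold dNat
  split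
  · subst n
    rw [Nat.card_eq_one_iff_unique]
    constructor
    · constructor
      rintro ⟨f, hf⟩ ⟨g, hg⟩
      ext i; exact absurd i.2 (by simp)
    · exact ⟨⟨fun i => 1, fun i => one_pos, by simp⟩⟩
  · rw [Nat.card_eq_zero]
    left
    constructor
    rintro ⟨f, hf, hp⟩
    simp at hp
    omega

lemma dNat_empty (k : ℕ) : IsEmpty {f : Fin k → ℕ // (∀ i, 0 < f i) ∧ ∏ i, f i = 0} := by
  constructor
  rintro ⟨f, hf, hp⟩
  rcases Finset.prod_eq_zero_iff.mp hp with ⟨i, -, hi⟩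
  exact absurd hi (hf i).ne'

instance dNat_finite (k n : ℕ) : Finite {f : Fin k → ℕ // (∀ i, 0 < f i) ∧ ∏ i, f i = n} := by
  rcases Nat.eq_zero_or_pos n with rfl | hn
  · have := dNat_empty k
    infer_instance
  · apply Finite.of_injective (β := Fin k → Fin (n+1))
      (f := fun F i => ⟨F.1 i, by
        have h1 : F.1 i ∣ ∏ j, F.1 j := Finset.dvd_prod_of_mem _ (Finset.mem_univ i)
        rw [F.2.2] at h1
        have := Nat.le_of_dvd hn h1
        omega⟩)
    rintro ⟨f, hf⟩ ⟨g, hg⟩ h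
    ext i
    exact congrArg (fun F => (F i : ℕ)) h

noncomputable def prodEquiv (k n : ℕ) (hn : 0 < n) :
    {f : Fin (k+1) → ℕ // (∀ i, 0 < f i) ∧ ∏ i, f i = n} ≃
      Σ d : n.divisors, {g : Fin k → ℕ // (∀ i, 0 < g i) ∧ ∏ i, g i = d} := by
  refine ⟨fun F => ⟨⟨∏ i, Fin.tail F.1 i, ?_⟩, ⟨Fin.tail F.1, fun i => F.2.1 i.succ, rfl⟩⟩,
    fun P => ⟨Fin.cons (n / P.1) P.2.1, ?_, ?_⟩, ?_, ?_⟩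
  · obtain ⟨f, hf, hp⟩ := F
    rw [Nat.mem_divisors]
    refine ⟨⟨f 0, ?_⟩, hn.ne'⟩
    show n = (∏ i : Fin k, f i.succ) * f 0
    rw [← hp, Fin.prod_univ_succ]
    exact mul_comm _ _
  · intro i
    refine Fin.cases ?_ (fun j => ?_) i
    · simp only [Fin.cons_zero]
      obtain ⟨d, hd⟩ := P.1
      rw [Nat.mem_divisors] at hd
      exact Nat.div_pos (Nat.le_of_dvd hn hd.1) (Nat.pos_of_dvd_of_pos hd.1 hn)
    · simpa using P.2.2.1 j
  · rw [Fin.prod_univ_succ]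
    simp only [Fin.cons_zero, Fin.cons_succ]
    rw [P.2.2.2]
    exact Nat.div_mul_cancel (Nat.mem_divisors.mp P.1.2).1
  · rintro ⟨f, hf, hp⟩
    apply Subtype.ext
    simp only
    have htp : 0 < ∏ i, Fin.tail f i := by
      apply Finset.prod_pos
      intro i _
      exact hf i.succ
    have h0 : n / ∏ i, Fin.tail f i = f 0 := by
      rw [← hp, Fin.prod_univ_succ]
      exact Nat.mul_div_cancel _ htp
    rw [h0, Fin.cons_self_tail]
  · rintro ⟨⟨d, hd⟩, ⟨g, hg, hgp⟩⟩
    have h1 : ∏ i, Fin.tail (Fin.cons (n / d) g : Fin (k+1) → ℕ) i = d := by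
      rw [Fin.tail_cons, hgp]
    apply Sigma.ext
    · exact Subtype.ext h1
    · refine (Subtype.heq_iff_coe_eq ?_).mpr rfl
      intro x
      simp only [h1]

lemma dNat_succ (k n : ℕ) : dNat (k+1) n = ∑ d ∈ n.divisors, dNat k d := by
  rcases Nat.eq_zero_or_pos n with rfl | hn
  · rw [Nat.divisors_zero, Finset.sum_empty, dNat]
    have := dNat_empty (k+1)
    exact Nat.card_of_isEmpty
  · rw [dNat, Nat.card_congr (prodEquiv k n hn)]
    have : ∀ d : n.divisors, Fintype {g : Fin k → ℕ // (∀ i, 0 < g i) ∧ ∏ i, g i = (d:ℕ)} :=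
      fun d => Fintype.ofFinite _
    rw [Nat.card_eq_fintype_card, Fintype.card_sigma]
    rw [← Finset.sum_coe_sort n.divisors (fun d => dNat k d)]
    apply Finset.sum_congr rfl
    intro d _
    rw [dNat, Nat.card_eq_fintype_card]

open ArithmeticFunction
open scoped ArithmeticFunction.zeta

lemma dNat_eq_zeta_pow (k n : ℕ) : dNat k n = (ζ ^ k : ArithmeticFunction ℕ) n := by
  induction k generalizing n with
  | zero => rw [pow_zero, one_apply, dNat_zero]
  | succ k ih =>
    rw [pow_succ', zeta_mul_apply, dNat_succ]
    exact Finset.sum_congr rfl fun d _ => ih d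

lemma zeta_pow_multiplicative (k : ℕ) :
    (ζ ^ k : ArithmeticFunction ℕ).IsMultiplicative := by
  induction k with
  | zero => rw [pow_zero]; exact isMultiplicative_one
  | succ k ih => rw [pow_succ']; exact isMultiplicative_zeta.mul ih

lemma dNat_mul_coprime {m n : ℕ} (k : ℕ) (h : m.Coprime n) :
    dNat k (m * n) = dNat k m * dNat k n := by
  rw [dNat_eq_zeta_pow, dNat_eq_zeta_pow, dNat_eq_zeta_pow]
  exact (zeta_pow_multiplicative k).2 h

lemma dNat_one_apply {n : ℕ} (hn : 0 < n) : dNat 1 n = 1 := by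
  rw [dNat_succ]
  rw [Finset.sum_congr rfl fun d _ => dNat_zero d, Finset.sum_ite_eq' n.divisors 1 (fun _ => 1)]
  simp [Nat.one_mem_divisors.mpr hn.ne']

lemma hockey (k : ℕ) : ∀ e : ℕ, ∑ j ∈ Finset.range (e+1), (j+k).choose k = (e+k+1).choose (k+1)
  | 0 => by simp
  | (e+1) => by
    rw [Finset.sum_range_succ, hockey k e]
    have h1 : e+1+k = e+k+1 := by ring
    rw [h1, Nat.choose_succ_succ (e+k+1) k]
    simp only [Nat.succ_eq_add_one]
    omega

lemma dNat_prime_pow {p : ℕ} (hp : p.Prime) (k : ℕ) :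
    ∀ e : ℕ, dNat (k+1) (p ^ e) = (e + k).choose k := by
  induction k with
  | zero =>
    intro e
    rw [dNat_one_apply (pow_pos hp.pos e)]
    simp
  | succ k ih =>
    intro e
    rw [dNat_succ, Nat.sum_divisors_prime_pow hp]
    rw [Finset.sum_congr rfl fun j _ => ih j]
    rw [hockey k e, show e+(k+1) = e+k+1 from by ring]

lemma prod_ineq (b e : ℕ) : (2*e+b).choose b ≤ ((e+b).choose b)^2 := by
  have key : (2*e+b).descFactorial b * b.descFactorial b ≤ ((e+b).descFactorial b)^2 := by
    rw [Nat.descFactorial_eq_prod_range, Nat.descFactorial_eq_prod_range,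
      Nat.descFactorial_eq_prod_range, ← Finset.prod_mul_distrib, ← Finset.prod_pow]
    apply Finset.prod_le_prod'
    intro i hi
    rw [Finset.mem_range] at hi
    have h1 : 2*e+b-i = 2*e+(b-i) := by omega
    have h2 : e+b-i = e+(b-i) := by omega
    rw [h1, h2]
    set j := b - i with hj
    have hj1 : 1 ≤ j := by omega
    nlinarith [sq_nonneg e]
  rw [Nat.descFactorial_self] at key
  rw [Nat.descFactorial_eq_factorial_mul_choose, Nat.descFactorial_eq_factorial_mul_choose] at key
  have key' : (2*e+b).choose b * ((Nat.factorial b) * (Nat.factorial b)) ≤ ((e+b).choose b)^2 * ((Nat.factorial b) * (Nat.factorial b)) :=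
    calc (2*e+b).choose b * ((Nat.factorial b) * (Nat.factorial b)) = (Nat.factorial b) * (2*e+b).choose b * (Nat.factorial b) := by ring
      _ ≤ ((Nat.factorial b) * (e+b).choose b)^2 := key
      _ = ((e+b).choose b)^2 * ((Nat.factorial b) * (Nat.factorial b)) := by ring
  exact Nat.le_of_mul_le_mul_right key' (by positivity)

lemma step_ineq (b : ℕ) : ∀ e : ℕ, (e+1) * (e+b).choose b ≤ (e+2*b+3).choose (2*b+3) := by
  intro e
  induction e with
  | zero => simp
  | succ e ih =>
    have id1 : (e+b).choose b * (e+b+1) = (e+b+1).choose b * (e+1) := by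
      have h := Nat.choose_mul_succ_eq (e+b) b
      rw [show e+b+1-b = e+1 from by omega] at h
      exact h
    have id2 : (e+2*b+3).choose (2*b+3) * (e+2*b+4) = (e+2*b+4).choose (2*b+3) * (e+1) := by
      have h := Nat.choose_mul_succ_eq (e+2*b+3) (2*b+3)
      rw [show e+2*b+3+1-(2*b+3) = e+1 from by omega,
        show e+2*b+3+1 = e+2*b+4 from by ring] at h
      exact h
    have h : ((e+1+1)*(e+1+b).choose b) * (e+1) ≤ (e+1+2*b+3).choose (2*b+3) * (e+1) :=
      calc ((e+1+1)*(e+1+b).choose b) * (e+1)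
          = (e+2)*((e+b+1).choose b * (e+1)) := by rw [show e+1+b = e+b+1 from by ring]; ring
        _ = (e+2)*((e+b).choose b * (e+b+1)) := by rw [← id1]
        _ = ((e+2)*(e+b+1))*((e+b).choose b) := by ring
        _ ≤ ((e+2*b+4)*(e+1))*((e+b).choose b) := by
            apply Nat.mul_le_mul_right
            nlinarith
        _ = (e+2*b+4)*((e+1)*(e+b).choose b) := by ring
        _ ≤ (e+2*b+4)*((e+2*b+3).choose (2*b+3)) := Nat.mul_le_mul_left _ ih
        _ = (e+2*b+3).choose (2*b+3) * (e+2*b+4) := by ring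
        _ = (e+2*b+4).choose (2*b+3) * (e+1) := id2
        _ = (e+1+2*b+3).choose (2*b+3) * (e+1) := by
            rw [show e+2*b+4 = e+1+2*b+3 from by ring]
    exact Nat.le_of_mul_le_mul_right h (by omega)

lemma key_prime_pow {p : ℕ} (hp : p.Prime) (b e : ℕ) :
    dNat (b+1) (p^(2*e)) * dNat 2 (p^e) ≤ (dNat (2*(b+1)+2) (p^e))^2 := by
  have h2 : (2:ℕ) = 1 + 1 := rfl
  rw [dNat_prime_pow hp b (2*e), h2, dNat_prime_pow hp 1 e]
  have h3 : 2*(b+1)+2 = (2*b+3)+1 := by ring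
  rw [h3, dNat_prime_pow hp (2*b+3) e]
  have he1 : (e+1).choose 1 = e + 1 := Nat.choose_one_right _
  rw [he1]
  calc (2*e+b).choose b * (e+1) ≤ ((e+b).choose b)^2 * (e+1) :=
        Nat.mul_le_mul_right _ (prod_ineq b e)
    _ ≤ ((e+b).choose b)^2 * (e+1)^2 := by
        apply Nat.mul_le_mul_left
        nlinarith
    _ = ((e+1) * (e+b).choose b)^2 := by ring
    _ ≤ ((e+2*b+3).choose (2*b+3))^2 := Nat.pow_le_pow_left (step_ineq b e) 2

end DNatAux

namespace DNatAux

lemma dNat_factorization (k : ℕ) {n : ℕ} (hn : n ≠ 0) :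
    dNat k n = n.factorization.prod fun p e => dNat k (p ^ e) := by
  rw [dNat_eq_zeta_pow,
    (zeta_pow_multiplicative k).multiplicative_factorization _ hn]
  exact Finsupp.prod_congr fun p _ => (dNat_eq_zeta_pow k (p ^ _)).symm

lemma dNat_sq_factorization (k : ℕ) {n : ℕ} (hn : n ≠ 0) :
    dNat k (n^2) = ∏ p ∈ n.factorization.support,
      dNat k (p ^ (2 * n.factorization p)) := by
  rw [dNat_factorization k (pow_ne_zero 2 hn), Nat.factorization_pow, Finsupp.prod,
    Finsupp.support_smul_eq two_ne_zero]
  exact Finset.prod_congr rfl fun p _ => by simp [Finsupp.smul_apply]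

end DNatAux

open DNatAux in
theorem stmt_2 (a n : ℕ) (ha : 0 < a) (hn : 0 < n) :
    dNat a (n ^ 2) * dNat 2 n ≤ (dNat (2 * a + 2) n) ^ 2 := by
  obtain ⟨b, rfl⟩ : ∃ b, a = b + 1 := ⟨a - 1, by omega⟩
  have hn' : n ≠ 0 := hn.ne'
  rw [dNat_sq_factorization _ hn', dNat_factorization 2 hn',
    dNat_factorization (2*(b+1)+2) hn', Finsupp.prod, Finsupp.prod,
    ← Finset.prod_mul_distrib, ← Finset.prod_pow]
  apply Finset.prod_le_prod'
  intro p hp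
  have hpp : p.Prime := Nat.prime_of_mem_primeFactors (by
    rwa [← Nat.support_factorization])
  exact key_prime_pow hpp b (n.factorization p)
end

section
/- For any real number X > 3 and any positive integer k, the sum over all n ≥ 1 of d_k(n)·e^{-n/X}/n is at most (log(3X))^k. -/
open Real ENNReal

/-- sum ≤ product + card for naturals ≥ 1 -/
lemma aux_sum_le_prod_add_card {ι : Type*} (s : Finset ι) (f : ι → ℕ)
    (h : ∀ i ∈ s, 1 ≤ f i) : ∑ i ∈ s, f i ≤ ∏ i ∈ s, f i + s.card := by
  classical
  induction s using Finset.induction_on with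
  | empty => simp
  | @insert a s ha ih =>
    rw [Finset.sum_insert ha, Finset.prod_insert ha, Finset.card_insert_of_notMem ha]
    have h1 : 1 ≤ f a := h a (Finset.mem_insert_self a s)
    have h2 : 1 ≤ ∏ i ∈ s, f i := Finset.one_le_prod' fun i hi => h i (Finset.mem_insert_of_mem hi)
    have h3 : ∑ i ∈ s, f i ≤ ∏ i ∈ s, f i + s.card :=
      ih fun i hi => h i (Finset.mem_insert_of_mem hi)
    have key : f a + ∏ i ∈ s, f i ≤ f a * ∏ i ∈ s, f i + 1 := by nlinarith
    omega

/-- tsum over tuple space factors as a power. -/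
lemma aux_tsum_pi_pow (E : ℕ → ℝ≥0∞) : ∀ k, (∑' f : Fin k → ℕ, ∏ i, E (f i)) = (∑' a, E a) ^ k
  | 0 => by
    rw [pow_zero]
    rw [tsum_eq_single (fun i : Fin 0 => 0) (fun b hb => absurd (Subsingleton.elim b _) hb)]
    simp
  | (k + 1) => by
    rw [← Equiv.tsum_eq (Fin.consEquiv (fun _ : Fin (k + 1) => ℕ)) (fun f => ∏ i, E (f i))]
    have h1 : ∀ p : ℕ × (Fin k → ℕ),
        (∏ i, E ((Fin.consEquiv (fun _ : Fin (k + 1) => ℕ)) p i)) = E p.1 * ∏ i, E (p.2 i) := by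
      rintro ⟨a, g⟩
      rw [Fin.prod_univ_succ]
      simp [Fin.consEquiv]
    rw [tsum_congr h1, ENNReal.tsum_prod']
    have h2 : ∀ a : ℕ, (∑' g : Fin k → ℕ, E a * ∏ i, E (g i)) = E a * (∑' b, E b) ^ k := by
      intro a
      rw [ENNReal.tsum_mul_left, aux_tsum_pi_pow E k]
    rw [tsum_congr h2, ENNReal.tsum_mul_right, pow_succ, mul_comm]

/-- fibers are finite -/
lemma aux_fib_finite (k n : ℕ) (hn : 0 < n) :
    Finite {f : Fin k → ℕ // (∀ i, 0 < f i) ∧ ∏ i, f i = n} := by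
  have : ∀ f : {f : Fin k → ℕ // (∀ i, 0 < f i) ∧ ∏ i, f i = n}, ∀ i, f.1 i < n + 1 := by
    rintro ⟨f, hf, hprod⟩ i
    have : f i ∣ n := hprod ▸ Finset.dvd_prod_of_mem f (Finset.mem_univ i)
    exact Nat.lt_succ_of_le (Nat.le_of_dvd hn this)
  apply Finite.of_injective (fun f => (fun i => (⟨f.1 i, this f i⟩ : Fin (n + 1))))
  intro f g h
  apply Subtype.ext
  funext i
  exact congrArg Fin.val (congrFun h i)

/-- the scalar inequality -/
lemma aux_scalar (X : ℝ) (hX : 3 < X) :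
    Real.exp (1 / X) * (-Real.log (1 - Real.exp (-(1 / X)))) ≤ Real.log (3 * X) := by
  have hX0 : (0 : ℝ) < X := by linarith
  set t : ℝ := 1 / X with ht_def
  have ht0 : 0 < t := by positivity
  have ht3 : t ≤ 1 / 3 := by
    rw [ht_def, div_le_div_iff₀ hX0 (by norm_num)]; linarith
  have het : Real.exp (-t) < 1 := Real.exp_lt_one_iff.mpr (by linarith)
  have hetpos : 0 < Real.exp (-t) := Real.exp_pos _
  -- 1 - exp(-t) ≥ t * exp(-t)
  have h1 : t * Real.exp (-t) ≤ 1 - Real.exp (-t) := by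
    have := Real.add_one_le_exp t
    have h := mul_le_mul_of_nonneg_right this hetpos.le
    rw [← Real.exp_add] at h
    simp at h
    nlinarith
  have h1pos : 0 < t * Real.exp (-t) := by positivity
  -- -log(1 - exp(-t)) ≤ -log t + t
  have h2 : -Real.log (1 - Real.exp (-t)) ≤ -Real.log t + t := by
    have := Real.log_le_log h1pos h1
    rw [Real.log_mul (ne_of_gt ht0) (ne_of_gt hetpos), Real.log_exp] at this
    linarith
  have hE1 : 1 ≤ Real.exp t := Real.one_le_exp ht0.le
  have hE0 : 0 < Real.exp t := Real.exp_pos _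
  have hlogt_neg : Real.log t < 0 := Real.log_neg ht0 (by linarith)
  -- exp t ≤ 1.4
  have hE14 : Real.exp t ≤ 1.4 := by
    have h3 : Real.exp t ≤ Real.exp (1 / 3) := Real.exp_le_exp.mpr ht3
    have h4 : (Real.exp (1 / 3)) ^ 3 = Real.exp 1 := by
      rw [← Real.exp_nat_mul]; norm_num
    have h5 : Real.exp 1 < 2.7182818286 := Real.exp_one_lt_d9
    have h13 : Real.exp (1 / 3) ≤ 1.4 := by
      by_contra hcon
      push_neg at hcon
      have := pow_lt_pow_left₀ hcon (by norm_num : (0:ℝ) ≤ 1.4) (three_ne_zero)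
      rw [h4] at this
      norm_num at this
      linarith
    linarith
  -- t * (-log t) ≤ 0.371
  have hm : t * (-Real.log t) ≤ 0.371 := by
    have h6 : Real.log t⁻¹ ≤ t⁻¹ / Real.exp 1 := by
      have h7 := Real.log_le_sub_one_of_pos (show 0 < t⁻¹ / Real.exp 1 by positivity)
      rw [Real.log_div (by positivity) (ne_of_gt (Real.exp_pos 1)), Real.log_exp] at h7
      linarith
    rw [Real.log_inv] at h6
    have h8 : t * (-Real.log t) ≤ t * (t⁻¹ / Real.exp 1) :=
      mul_le_mul_of_nonneg_left h6 ht0.le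
    rw [← mul_div_assoc, mul_inv_cancel₀ (ne_of_gt ht0)] at h8
    have h9 : (2.7182818283 : ℝ) < Real.exp 1 := Real.exp_one_gt_d9
    have h10 : (1 : ℝ) / Real.exp 1 ≤ 0.371 := by
      rw [div_le_iff₀ (Real.exp_pos 1)]; nlinarith
    calc t * (-Real.log t) ≤ 1 / Real.exp 1 := by simpa using h8
    _ ≤ 0.371 := h10
  -- log 3 ≥ 1
  have hlog3 : 1 ≤ Real.log 3 := by
    rw [Real.le_log_iff_exp_le (by norm_num)]
    linarith [Real.exp_one_lt_d9]
  -- main chain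
  have hrhs : Real.log (3 * X) = Real.log 3 + (-Real.log t) := by
    rw [Real.log_mul (by norm_num) (ne_of_gt hX0), ht_def, one_div, Real.log_inv, neg_neg]
  have hkey : Real.exp t * (-Real.log t + t) ≤ Real.log 3 + (-Real.log t) := by
    have het1 : Real.exp t - 1 ≤ t * Real.exp t := by
      have h := mul_le_mul_of_nonneg_right (Real.add_one_le_exp (-t)) hE0.le
      rw [← Real.exp_add, neg_add_cancel, Real.exp_zero] at h
      nlinarith
    have hL : 0 < -Real.log t := by linarith
    have hp1 : (Real.exp t - 1) * (-Real.log t) ≤ (t * Real.exp t) * (-Real.log t) :=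
      mul_le_mul_of_nonneg_right het1 hL.le
    have hp2 : Real.exp t * (t * (-Real.log t)) ≤ 1.4 * 0.371 :=
      mul_le_mul hE14 hm (by positivity) (by norm_num)
    have hp3 : t * Real.exp t ≤ (1 / 3) * 1.4 := by
      apply mul_le_mul ht3 hE14 hE0.le (by norm_num)
    nlinarith
  calc Real.exp t * (-Real.log (1 - Real.exp (-t)))
      ≤ Real.exp t * (-Real.log t + t) := by
        apply mul_le_mul_of_nonneg_left h2 hE0.le
    _ ≤ Real.log 3 + (-Real.log t) := hkey
    _ = Real.log (3 * X) := hrhs.symm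

theorem stmt_3 (X : ℝ) (hX : 3 < X) (k : ℕ) (hk : 1 ≤ k) :
    ∑' n : ℕ, (dNat k (n + 1) : ℝ) * Real.exp (-((n : ℝ) + 1) / X) / ((n : ℝ) + 1)
      ≤ (Real.log (3 * X)) ^ k := by
  have hX0 : (0 : ℝ) < X := by linarith
  set E : ℕ → ℝ≥0∞ := fun a => ENNReal.ofReal (Real.exp (-(a : ℝ) / X) / a) with hE_def
  set g : ℕ → ℝ := fun n =>
    (dNat k (n + 1) : ℝ) * Real.exp (-((n : ℝ) + 1) / X) / ((n : ℝ) + 1) with hg_def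
  have hg_nonneg : ∀ n, 0 ≤ g n := by
    intro n
    apply div_nonneg (mul_nonneg (Nat.cast_nonneg _) (Real.exp_pos _).le) (by positivity)
  -- fiber type
  let Fib : ℕ → Type := fun n => {f : Fin k → ℕ // (∀ i, 0 < f i) ∧ ∏ i, f i = n + 1}
  have hFibFin : ∀ n, Finite (Fib n) := fun n => aux_fib_finite k (n + 1) (Nat.succ_pos n)
  -- step 1: pointwise bound
  have step1 : ∀ n : ℕ, ENNReal.ofReal (g n) ≤
      ENNReal.ofReal (Real.exp ((k : ℝ) / X)) * ∑' f : Fib n, ∏ i, E (f.1 i) := by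
    intro n
    -- per-tuple lower bound
    have htuple : ∀ f : Fib n,
        ENNReal.ofReal (Real.exp (-(k : ℝ) / X) * (Real.exp (-((n : ℝ) + 1) / X) / ((n : ℝ) + 1)))
          ≤ ∏ i, E (f.1 i) := by
      rintro ⟨f, hf, hprod⟩
      have hcast : (∏ i, (f i : ℝ)) = ((n : ℝ) + 1) := by
        rw [← Nat.cast_prod, hprod]; push_cast; ring
      have hprodE : (∏ i, E (f i)) =
          ENNReal.ofReal (Real.exp (-(∑ i, (f i : ℝ)) / X) / ((n : ℝ) + 1)) := by
        rw [← ENNReal.ofReal_prod_of_nonneg (fun i _ => by positivity)]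
        congr 1
        rw [Finset.prod_div_distrib, hcast]
        congr 1
        rw [← Real.exp_sum]
        congr 1
        rw [← Finset.sum_div, ← Finset.sum_neg_distrib]
      rw [hprodE]
      apply ENNReal.ofReal_le_ofReal
      rw [← mul_div_assoc, ← Real.exp_add]
      have hsum : (∑ i, f i) ≤ (n + 1) + k := by
        have := aux_sum_le_prod_add_card Finset.univ f (fun i _ => hf i)
        simpa [hprod] using this
      have hsumcast : (∑ i, (f i : ℝ)) ≤ ((n : ℝ) + 1) + k := by
        rw [← Nat.cast_sum]
        calc ((∑ i, f i : ℕ) : ℝ) ≤ (((n + 1) + k : ℕ) : ℝ) := Nat.cast_le.mpr hsum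
        _ = ((n : ℝ) + 1) + k := by push_cast; ring
      gcongr
      rw [← add_div, div_le_div_iff₀ hX0 hX0]
      nlinarith
    -- sum of constant over fiber
    have : Fintype (Fib n) := @Fintype.ofFinite _ (hFibFin n)
    have hconst : ∀ c : ℝ≥0∞, (∑' _ : Fib n, c) = (dNat k (n + 1) : ℕ) * c := by
      intro c
      rw [tsum_fintype]
      rw [Finset.sum_const, nsmul_eq_mul]
      congr 2
      rw [Finset.card_univ, ← Nat.card_eq_fintype_card]
      rfl
    set c : ℝ := Real.exp (-(k : ℝ) / X) * (Real.exp (-((n : ℝ) + 1) / X) / ((n : ℝ) + 1))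
      with hc_def
    have hfiber : (dNat k (n + 1) : ℝ≥0∞) * ENNReal.ofReal c ≤ ∑' f : Fib n, ∏ i, E (f.1 i) := by
      rw [← hconst (ENNReal.ofReal c)]
      exact Summable.tsum_le_tsum htuple ENNReal.summable ENNReal.summable
    calc ENNReal.ofReal (g n)
        = ENNReal.ofReal (Real.exp ((k : ℝ) / X)) * ((dNat k (n + 1) : ℝ≥0∞) *
            ENNReal.ofReal c) := by
          rw [← mul_assoc, mul_comm (ENNReal.ofReal (Real.exp ((k : ℝ) / X)))
            ((dNat k (n + 1) : ℝ≥0∞)), mul_assoc, ← ENNReal.ofReal_mul (Real.exp_pos _).le]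
          rw [hc_def, ← mul_assoc, ← Real.exp_add]
          have : (k : ℝ) / X + -(k : ℝ) / X = 0 := by ring
          rw [this, Real.exp_zero, one_mul, hg_def]
          simp only
          rw [mul_div_assoc, ENNReal.ofReal_mul (Nat.cast_nonneg _)]
          congr 1
          simp [ENNReal.ofReal_natCast]
      _ ≤ ENNReal.ofReal (Real.exp ((k : ℝ) / X)) * ∑' f : Fib n, ∏ i, E (f.1 i) :=
          mul_le_mul_right hfiber _
  -- step 2: sum over n
  have step2 : (∑' n, ENNReal.ofReal (g n)) ≤
      ENNReal.ofReal (Real.exp ((k : ℝ) / X)) * (∑' a, E a) ^ k := by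
    calc (∑' n, ENNReal.ofReal (g n))
        ≤ ∑' n, ENNReal.ofReal (Real.exp ((k : ℝ) / X)) * ∑' f : Fib n, ∏ i, E (f.1 i) :=
          Summable.tsum_le_tsum step1 ENNReal.summable ENNReal.summable
      _ = ENNReal.ofReal (Real.exp ((k : ℝ) / X)) *
            ∑' n, ∑' f : Fib n, ∏ i, E (f.1 i) := ENNReal.tsum_mul_left
      _ ≤ ENNReal.ofReal (Real.exp ((k : ℝ) / X)) * (∑' a, E a) ^ k := by
          apply mul_le_mul_right
          rw [← ENNReal.tsum_sigma' (fun p : Σ n, Fib n => ∏ i, E (p.2.1 i))]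
          rw [← aux_tsum_pi_pow E k]
          apply Summable.tsum_le_tsum_of_inj (fun p : Σ n, Fib n => p.2.1)
          · rintro ⟨n, f, hf, hfp⟩ ⟨m, g', hg', hgp⟩ h
            simp only at h
            have hnm : n = m := by
              have : n + 1 = m + 1 := by rw [← hfp, ← hgp, h]
              omega
            subst hnm
            exact congrArg (Sigma.mk n) (Subtype.ext h)
          · intro c _
            exact zero_le
          · intro p
            exact le_rfl
          · exact ENNReal.summable
          · exact ENNReal.summable
  -- step 3: compute the geometric-log sum
  have hr1 : Real.exp (-(1 / X)) < 1 := Real.exp_lt_one_iff.mpr (by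
    rw [neg_lt_zero]; positivity)
  have hr0 : 0 < Real.exp (-(1 / X)) := Real.exp_pos _
  have step3 : (∑' a, E a) = ENNReal.ofReal (-Real.log (1 - Real.exp (-(1 / X)))) := by
    have hE0 : E 0 = 0 := by
      simp [hE_def]
    rw [tsum_eq_zero_add' ENNReal.summable, hE0, zero_add]
    have hterm : ∀ n : ℕ, E (n + 1) =
        ENNReal.ofReal ((Real.exp (-(1 / X))) ^ (n + 1) / ((n : ℝ) + 1)) := by
      intro n
      simp only [hE_def]
      congr 2
      · rw [← Real.exp_nat_mul]
        congr 1
        push_cast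
        ring
      · push_cast; ring
    rw [tsum_congr hterm]
    have habs : |Real.exp (-(1 / X))| < 1 := by
      rw [abs_of_pos hr0]; exact hr1
    have hhs := hasSum_pow_div_log_of_abs_lt_one habs
    rw [← ENNReal.ofReal_tsum_of_nonneg (fun n => by positivity) hhs.summable]
    congr 1
    have := hhs.tsum_eq
    convert this using 2
  -- step 4: final ENNReal bound
  set B : ℝ := Real.log (3 * X) with hB_def
  have hB1 : 1 ≤ B := by
    rw [hB_def]
    rw [Real.le_log_iff_exp_le (by positivity)]
    calc Real.exp 1 ≤ 3 := by linarith [Real.exp_one_lt_d9]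
    _ ≤ 3 * X := by nlinarith
  have step4 : (∑' n, ENNReal.ofReal (g n)) ≤ (ENNReal.ofReal B) ^ k := by
    refine step2.trans ?_
    rw [step3]
    have hexpk : Real.exp ((k : ℝ) / X) = (Real.exp (1 / X)) ^ k := by
      rw [← Real.exp_nat_mul]
      congr 1
      ring
    rw [hexpk, ENNReal.ofReal_pow (Real.exp_pos _).le, ← mul_pow]
    apply pow_le_pow_left' _ k
    rw [← ENNReal.ofReal_mul (Real.exp_pos _).le]
    exact ENNReal.ofReal_le_ofReal (aux_scalar X hX)
  -- step 5: back to reals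
  have hBk : ((ENNReal.ofReal B) ^ k : ℝ≥0∞) ≠ ⊤ := by
    apply ENNReal.pow_ne_top
    exact ENNReal.ofReal_ne_top
  have hne : (∑' n, ENNReal.ofReal (g n)) ≠ ⊤ := (step4.trans_lt (lt_top_iff_ne_top.mpr hBk)).ne
  have hsummable : Summable g := by
    have := ENNReal.summable_toReal hne
    simpa [ENNReal.toReal_ofReal, hg_nonneg] using this
  calc (∑' n, g n) = (∑' n, ENNReal.ofReal (g n)).toReal := by
        rw [ENNReal.tsum_toReal_eq (fun n => ENNReal.ofReal_ne_top)]
        exact tsum_congr fun n => (ENNReal.toReal_ofReal (hg_nonneg n)).symm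
    _ ≤ ((ENNReal.ofReal B) ^ k).toReal := ENNReal.toReal_mono hBk step4
    _ = B ^ k := by
        rw [ENNReal.toReal_pow, ENNReal.toReal_ofReal (by linarith)]
end

section
/- For any complex numbers z₁, z₂ and any real σ > 1/2, the Dirichlet series ∑_{n≥1} d_{z₁}(n)·d_{z₂}(n)/n^{2σ} equals the Euler product over primes p of (1/(2π)) ∫_{-π}^{π} (1 - e^{iθ}/p^σ)^{-z₁} (1 - e^{-iθ}/p^σ)^{-z₂} dθ. -/
open Complex

section Aux
open Finset

noncomputable def binCoef (z : ℂ) (e : ℕ) : ℂ := (∏ i ∈ Finset.range e, (z + i)) / (Nat.factorial e)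

lemma binCoef_zero (z : ℂ) : binCoef z 0 = 1 := by simp [binCoef]

lemma binCoef_succ (z : ℂ) (e : ℕ) :
    ((e:ℂ)+1) * binCoef z (e+1) = (z + e) * binCoef z e := by
  simp only [binCoef, Finset.prod_range_succ, Nat.factorial_succ]
  push_cast
  have h1 : ((Nat.factorial e : ℂ)) ≠ 0 := by exact_mod_cast (Nat.factorial_ne_zero e)
  have h2 : ((e:ℂ)+1) ≠ 0 := Nat.cast_add_one_ne_zero e
  field_simp

lemma prod_telescope (e : ℕ) : ∏ i ∈ range e, (((i:ℝ)+2)/((i:ℝ)+1)) = (e:ℝ)+1 := by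
  induction e with
  | zero => simp
  | succ n ih =>
    rw [Finset.prod_range_succ, ih]
    have : ((n:ℝ)+1) ≠ 0 := by positivity
    field_simp
    push_cast; ring

lemma binCoef_norm_le (z : ℂ) (K : ℕ) (hK : ‖z‖ ≤ K) (e : ℕ) :
    ‖binCoef z e‖ ≤ ((e:ℝ)+1)^K := by
  have hfac : ((Nat.factorial e : ℝ)) = ∏ i ∈ range e, ((i:ℝ)+1) := by
    induction e with
    | zero => simp
    | succ n ih => rw [Finset.prod_range_succ, ← ih]; push_cast [Nat.factorial_succ]; ring
  have : ‖binCoef z e‖ = (∏ i ∈ range e, ‖z + i‖) / (Nat.factorial e) := by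
    simp [binCoef, norm_div, norm_prod]
  rw [this, hfac, ← Finset.prod_div_distrib]
  calc ∏ i ∈ range e, ‖z + (i:ℂ)‖ / ((i:ℝ)+1)
      ≤ ∏ i ∈ range e, (((i:ℝ)+2)/((i:ℝ)+1))^K := by
        apply Finset.prod_le_prod
        · intro i _; positivity
        · intro i hmem
          have hz : ‖z + (i:ℂ)‖ ≤ (K:ℝ) + i := by
            calc ‖z + (i:ℂ)‖ ≤ ‖z‖ + ‖(i:ℂ)‖ := norm_add_le _ _
            _ ≤ (K:ℝ) + i := by
                  have : ‖(i:ℂ)‖ = (i:ℝ) := by simp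
                  rw [this]; linarith
          have hi : (0:ℝ) < (i:ℝ)+1 := by positivity
          rw [div_le_iff₀ hi]
          have hber : 1 + (K:ℝ) * (1/((i:ℝ)+1)) ≤ (1 + 1/((i:ℝ)+1))^K := by
            have ha : (-2:ℝ) ≤ 1/((i:ℝ)+1) :=
              le_trans (by norm_num) (by positivity : (0:ℝ) ≤ 1/((i:ℝ)+1))
            have := one_add_mul_le_pow ha K
            linarith
          have h2 : ((i:ℝ)+2)/((i:ℝ)+1) = 1 + 1/((i:ℝ)+1) := by field_simp; ring
          calc ‖z + (i:ℂ)‖ ≤ (K:ℝ) + i := hz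
          _ ≤ (1 + (K:ℝ)*(1/((i:ℝ)+1))) * ((i:ℝ)+1) := by
              have : (1 + (K:ℝ)*(1/((i:ℝ)+1))) * ((i:ℝ)+1) = (i:ℝ)+1+(K:ℝ) := by
                field_simp
              rw [this]; linarith
          _ ≤ (1 + 1/((i:ℝ)+1))^K * ((i:ℝ)+1) := by nlinarith [hi]
          _ = (((i:ℝ)+2)/((i:ℝ)+1))^K * ((i:ℝ)+1) := by
                rw [h2]
    _ = (∏ i ∈ range e, (((i:ℝ)+2)/((i:ℝ)+1)))^K := by rw [← Finset.prod_pow]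
    _ = ((e:ℝ)+1)^K := by rw [prod_telescope]

lemma summable_pow_succ (K : ℕ) {r : ℝ} (h1 : r < 1) (h0 : 0 ≤ r) :
    Summable (fun e : ℕ => ((e:ℝ)+1)^K * r^e) := by
  have hr : ‖r‖ < 1 := by rwa [Real.norm_eq_abs, _root_.abs_of_nonneg h0]
  have h2 : Summable (fun e : ℕ => (2:ℝ)^K * ((e:ℝ)^K * r^e) + (2:ℝ)^K * r^e) :=
    (((summable_pow_mul_geometric_of_norm_lt_one K hr).mul_left _).add
      ((summable_geometric_of_norm_lt_one hr).mul_left _))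
  refine h2.of_nonneg_of_le (fun e => by positivity) (fun e => ?_)
  have he : ((e:ℝ)+1)^K ≤ (2:ℝ)^K * ((e:ℝ)^K + 1) := by
    rcases Nat.eq_zero_or_pos e with he | he
    · subst he
      have hA : (1:ℝ) ≤ 2^K := by
        calc (1:ℝ) = 1^K := (one_pow K).symm
        _ ≤ 2^K := pow_le_pow_left₀ (by norm_num) (by norm_num) K
      have hB : (0:ℝ) ≤ (0:ℝ)^K := by positivity
      simp only [Nat.cast_zero, zero_add, one_pow]
      nlinarith
    · have h1e : (1:ℝ) ≤ (e:ℝ) := by exact_mod_cast he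
      calc ((e:ℝ)+1)^K ≤ ((e:ℝ)+(e:ℝ))^K := by
            apply pow_le_pow_left₀ (by positivity); linarith
      _ = (2:ℝ)^K * (e:ℝ)^K := by rw [show (e:ℝ)+(e:ℝ) = 2*(e:ℝ) by ring, mul_pow]
      _ ≤ (2:ℝ)^K * ((e:ℝ)^K + 1) := by nlinarith [pow_pos (by norm_num : (0:ℝ) < 2) K]
  have hre : (0:ℝ) ≤ r^e := by positivity
  calc ((e:ℝ)+1)^K * r^e ≤ ((2:ℝ)^K * ((e:ℝ)^K + 1)) * r^e := by nlinarith
  _ = (2:ℝ)^K * ((e:ℝ)^K * r^e) + (2:ℝ)^K * r^e := by ring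

lemma summable_binCoef_norm (z : ℂ) {r : ℝ} (h1 : r < 1) (h0 : 0 ≤ r) :
    Summable (fun e : ℕ => ‖binCoef z e‖ * r^e) := by
  obtain ⟨K, hK⟩ : ∃ K : ℕ, ‖z‖ ≤ K := ⟨⌈‖z‖⌉₊, Nat.le_ceil _⟩
  refine (summable_pow_succ K h1 h0).of_nonneg_of_le (fun e => by positivity) (fun e => ?_)
  exact mul_le_mul_of_nonneg_right (binCoef_norm_le z K hK e) (by positivity)

lemma summable_binCoef_mul_pow (z : ℂ) {w : ℂ} (hw : ‖w‖ < 1) :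
    Summable (fun e : ℕ => binCoef z e * w^e) := by
  refine Summable.of_norm ?_
  have := summable_binCoef_norm z hw (norm_nonneg w)
  simpa [norm_mul, norm_pow] using this

theorem hasSum_binCoef (z : ℂ) {w : ℂ} (hw : ‖w‖ < 1) :
    HasSum (fun e => binCoef z e * w ^ e) ((1 - w) ^ (-z)) := by
  set r : ℝ := (‖w‖ + 1)/2 with hrdef
  have hwr : ‖w‖ < r := by rw [hrdef]; linarith
  have hr1 : r < 1 := by rw [hrdef]; linarith
  have hr0 : 0 ≤ r := by positivity
  set t : Set ℂ := Metric.ball (0:ℂ) r with htdef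
  have htopen : IsOpen t := Metric.isOpen_ball
  have htconv : Convex ℝ t := convex_ball 0 r
  have htpre : IsPreconnected t := htconv.isPreconnected
  have hmem : ∀ y ∈ t, ‖y‖ < r := by
    intro y hy; rwa [htdef, mem_ball_zero_iff] at hy
  have hwt : w ∈ t := mem_ball_zero_iff.mpr hwr
  have h0t : (0:ℂ) ∈ t := mem_ball_zero_iff.mpr
    (by rw [norm_zero]; have := norm_nonneg w; linarith)
  set g : ℂ → ℂ := fun y => ∑' e, binCoef z e * y^e with hgdef
  set u : ℕ → ℝ := fun e => ‖binCoef z e‖ * ((e:ℝ) * r^(e-1)) with hudef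
  obtain ⟨K, hK⟩ : ∃ K : ℕ, ‖z‖ ≤ K := ⟨⌈‖z‖⌉₊, Nat.le_ceil _⟩
  have hu : Summable u := by
    rw [← summable_nat_add_iff 1]
    refine ((summable_pow_succ (K+1) hr1 hr0).mul_left ((2:ℝ)^(K+1))).of_nonneg_of_le
      (fun e => by positivity) (fun e => ?_)
    have h1 : ‖binCoef z (e+1)‖ ≤ ((e:ℝ)+2)^K := by
      have h := binCoef_norm_le z K hK (e+1)
      push_cast at h
      rwa [show ((e:ℝ)+1+1) = (e:ℝ)+2 by ring] at h
    have h2 : ((e:ℝ)+2)^K ≤ 2^K * ((e:ℝ)+1)^K := by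
      rw [← mul_pow]
      apply pow_le_pow_left₀ (by positivity)
      linarith
    have h3 : (0:ℝ) ≤ r^e := by positivity
    have h4 : u (e+1) = ‖binCoef z (e+1)‖ * (((e:ℝ)+1) * r^e) := by
      rw [hudef]; push_cast; norm_num
    rw [h4]
    calc ‖binCoef z (e+1)‖ * (((e:ℝ)+1) * r^e)
        ≤ ((e:ℝ)+2)^K * (((e:ℝ)+1) * r^e) := by
          apply mul_le_mul_of_nonneg_right h1 (by positivity)
      _ ≤ (2^K * ((e:ℝ)+1)^K) * (((e:ℝ)+1) * r^e) := by
          apply mul_le_mul_of_nonneg_right h2 (by positivity)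
      _ = 2^K * (((e:ℝ)+1)^(K+1) * r^e) := by rw [pow_succ]; ring
      _ ≤ 2^(K+1) * (((e:ℝ)+1)^(K+1) * r^e) := by
          have h5 : (2:ℝ)^K ≤ 2^(K+1) := by
            apply pow_le_pow_right₀ (by norm_num); omega
          exact mul_le_mul_of_nonneg_right h5 (by positivity)
  have hcsum : ∀ y : ℂ, ‖y‖ < 1 → Summable (fun e : ℕ => binCoef z e * y^e) :=
    fun y hy => summable_binCoef_mul_pow z hy
  have hbound : ∀ (e : ℕ) (y : ℂ), y ∈ t → ‖binCoef z e * ((e:ℂ) * y^(e-1))‖ ≤ u e := by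
    intro e y hy
    rw [norm_mul, norm_mul, norm_pow]
    have h1 : ‖(e:ℂ)‖ = (e:ℝ) := by simp
    rw [h1]
    show _ ≤ ‖binCoef z e‖ * ((e:ℝ) * r^(e-1))
    have h2 : ‖y‖^(e-1) ≤ r^(e-1) := pow_le_pow_left₀ (norm_nonneg y) (hmem y hy).le _
    have h3 : (0:ℝ) ≤ ‖binCoef z e‖ := norm_nonneg _
    have h4 : (0:ℝ) ≤ (e:ℝ) := by positivity
    exact mul_le_mul_of_nonneg_left (mul_le_mul_of_nonneg_left h2 h4) h3
  have hDeriv : ∀ y ∈ t, HasDerivAt g (∑' e, binCoef z e * ((e:ℂ) * y^(e-1))) y := by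
    intro y hy
    exact hasDerivAt_tsum_of_isPreconnected hu htopen htpre
      (fun e x _ => (hasDerivAt_pow e x).const_mul _) hbound h0t
      (hcsum 0 (by rw [norm_zero]; norm_num)) hy
  have hkey : ∀ y ∈ t, (1 - y) * (∑' e, binCoef z e * ((e:ℂ) * y^(e-1))) = z * g y := by
    intro y hy
    have hy1 : ‖y‖ < 1 := lt_trans (hmem y hy) hr1
    have hS : Summable (fun e : ℕ => binCoef z e * ((e:ℂ) * y^(e-1))) :=
      Summable.of_norm (hu.of_nonneg_of_le (fun e => norm_nonneg _) (fun e => hbound e y hy))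
    set S := ∑' e, binCoef z e * ((e:ℂ) * y^(e-1)) with hSdef
    have hA : HasSum (fun e : ℕ => binCoef z e * ((e:ℂ) * y^(e-1))) S := hS.hasSum
    have h1 : HasSum (fun e : ℕ => binCoef z (e+1) * (((e:ℂ)+1) * y^e)) S := by
      have h0 : (S : ℂ) - ∑ i ∈ Finset.range 1, binCoef z i * ((i:ℂ) * y^(i-1)) = S := by
        simp
      have h2 := (hasSum_nat_add_iff' (f := fun e => binCoef z e * ((e:ℂ) * y^(e-1))) 1).mpr hA
      rw [h0] at h2
      convert h2 using 2 with e
      · rfl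
      push_cast
      norm_num
    have h2 : HasSum (fun e : ℕ => binCoef z e * ((e:ℂ) * y^(e-1)) * y) (S * y) := hA.mul_right y
    have h3 := h1.sub h2
    have h4 : (fun e : ℕ => binCoef z (e+1) * (((e:ℂ)+1) * y^e) - binCoef z e * ((e:ℂ) * y^(e-1)) * y)
        = fun e => z * (binCoef z e * y^e) := by
      funext e
      have hrec := binCoef_succ z e
      have hy' : (e:ℂ) * y^(e-1) * y = (e:ℂ) * y^e := by
        cases e with
        | zero => simp
        | succ n => rw [Nat.add_sub_cancel, pow_succ]; ring
      calc binCoef z (e+1) * (((e:ℂ)+1) * y^e) - binCoef z e * ((e:ℂ) * y^(e-1)) * y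
          = (((e:ℂ)+1) * binCoef z (e+1)) * y^e - binCoef z e * ((e:ℂ)*y^(e-1)*y) := by ring
        _ = ((z+e) * binCoef z e) * y^e - binCoef z e * ((e:ℂ)*y^e) := by rw [hrec, hy']
        _ = z * (binCoef z e * y^e) := by ring
    rw [h4] at h3
    have h5 : HasSum (fun e => z * (binCoef z e * y^e)) (z * g y) := (hcsum y hy1).hasSum.mul_left z
    have h6 := h3.unique h5
    linear_combination h6
  have hre : ∀ y ∈ t, (1:ℂ) - y ∈ slitPlane := by
    intro y hy
    refine Or.inl ?_
    have h1 : |y.re| ≤ ‖y‖ := Complex.abs_re_le_norm y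
    have h2 := hmem y hy
    have : y.re < 1 := by
      have := abs_le.mp h1
      linarith [this.2]
    simp only [Complex.sub_re, Complex.one_re]
    linarith
  set h : ℂ → ℂ := fun y => g y * (1 - y)^z with hhdef
  have hderivh : ∀ y ∈ t, HasDerivAt h 0 y := by
    intro y hy
    have hg' := hDeriv y hy
    have hf : HasDerivAt (fun x : ℂ => 1 - x) (-1) y := (hasDerivAt_id y).const_sub 1
    have hc : HasDerivAt (fun x : ℂ => (1 - x)^z) (z * (1-y)^(z-1) * (-1)) y :=
      hf.cpow_const (hre y hy)
    have hprod := hg'.mul hc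
    have hne : (1:ℂ) - y ≠ 0 := slitPlane_ne_zero (hre y hy)
    have hz1 : (1-y)^z = (1-y)^(z-1) * (1-y) := by
      have h7 := Complex.cpow_add (x := 1-y) (z-1) 1 hne
      rw [sub_add_cancel, Complex.cpow_one] at h7
      exact h7
    have hk := hkey y hy
    refine hprod.congr_deriv ?_
    symm
    rw [hz1]
    linear_combination (-((1:ℂ)-y)^(z-1)) * hk
  have hconst : h w = h 0 := by
    have hdiff : DifferentiableOn ℂ h t :=
      fun y hy => (hderivh y hy).differentiableAt.differentiableWithinAt
    refine htconv.is_const_of_fderivWithin_eq_zero hdiff ?_ hwt h0t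
    intro x hx
    have h1 : HasFDerivAt h ((1 : ℂ →L[ℂ] ℂ).smulRight (0:ℂ)) x := (hderivh x hx).hasFDerivAt
    have h2 : ((1 : ℂ →L[ℂ] ℂ).smulRight (0:ℂ)) = 0 := by ext v; simp
    rw [fderivWithin_eq_fderiv (htopen.uniqueDiffOn.uniqueDiffWithinAt hx)
      (hderivh x hx).differentiableAt]
    rw [← h2]
    exact h1.fderiv
  have hg0 : g 0 = 1 := by
    rw [hgdef]
    simp only
    rw [tsum_eq_single 0 (fun e he => by simp [zero_pow he])]
    simp [binCoef_zero]
  have hh0 : h 0 = 1 := by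
    rw [hhdef]
    simp only [hg0, sub_zero, Complex.one_cpow, one_mul]
  have hhw : (1-w)^z * g w = 1 := by
    have := hconst.trans hh0
    rw [hhdef] at this
    simp only at this
    linear_combination this
  have hnew : (1:ℂ) - w ≠ 0 := slitPlane_ne_zero (hre w hwt)
  have hgw : g w = (1-w)^(-z) := by
    rw [Complex.cpow_neg]
    exact eq_inv_of_mul_eq_one_left (by linear_combination hhw)
  exact (summable_binCoef_mul_pow z hw).hasSum_iff.mpr hgw

open intervalIntegral MeasureTheory in
lemma integral_orth (n : ℤ) :
    ∫ θ in (-Real.pi)..Real.pi, Complex.exp ((n:ℂ)*θ*I) = if n = 0 then (2*Real.pi:ℂ) else 0 := by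
  rcases eq_or_ne n 0 with hn | hn
  · subst hn
    simp only [Int.cast_zero, zero_mul, Complex.exp_zero, if_true]
    rw [intervalIntegral.integral_const]
    simp [smul_eq_mul]
    push_cast
    ring
  · rw [if_neg hn]
    have hc : ((n:ℂ)*I) ≠ 0 := by
      simp [Complex.ext_iff, Int.cast_injective.ne_iff]
      exact_mod_cast hn
    have h1 : (fun θ : ℝ => Complex.exp ((n:ℂ)*θ*I)) = fun θ : ℝ => Complex.exp (((n:ℂ)*I)*θ) := by
      funext θ; ring_nf
    rw [h1, integral_exp_mul_complex hc]
    have h2 : Complex.exp ((n:ℂ)*I*(Real.pi:ℂ)) = Complex.exp ((n:ℂ)*I*((-Real.pi:ℝ):ℂ)) := by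
      have h3 : ((n:ℂ)*I*(Real.pi:ℂ)) = (n:ℂ)*I*((-Real.pi:ℝ):ℂ) + (n:ℂ)*(2*(Real.pi:ℂ)*I) := by
        push_cast; ring
      rw [h3, Complex.exp_add, Complex.exp_int_mul_two_pi_mul_I, mul_one]
    rw [h2]
    simp

open intervalIntegral in
lemma integral_orth' (j k : ℕ) :
    ∫ θ in (-Real.pi)..Real.pi, Complex.exp ((θ:ℂ)*I)^j * Complex.exp (-(θ:ℂ)*I)^k
      = if j = k then (2*Real.pi:ℂ) else 0 := by
  have h1 : ∀ θ : ℝ, Complex.exp ((θ:ℂ)*I)^j * Complex.exp (-(θ:ℂ)*I)^k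
      = Complex.exp ((((j:ℤ)-(k:ℤ) : ℤ):ℂ)*θ*I) := by
    intro θ
    rw [← Complex.exp_nat_mul, ← Complex.exp_nat_mul, ← Complex.exp_add]
    congr 1
    push_cast
    ring
  simp_rw [h1]
  rw [integral_orth]
  congr 1
  simp [sub_eq_zero]

open MeasureTheory intervalIntegral in
lemma local_identity (z₁ z₂ : ℂ) {x : ℝ} (h0 : 0 ≤ x) (h1 : x < 1) :
    ∫ θ in (-Real.pi)..Real.pi,
      (1 - Complex.exp ((θ:ℂ)*I) * x)^(-z₁) * (1 - Complex.exp (-(θ:ℂ)*I) * x)^(-z₂)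
    = (2*(Real.pi:ℂ)) * ∑' e : ℕ, binCoef z₁ e * binCoef z₂ e * ((x:ℂ)^e * (x:ℂ)^e) := by
  have hpi : (0:ℝ) < Real.pi := Real.pi_pos
  have hle : -Real.pi ≤ Real.pi := by linarith
  have habs1 : ∀ θ : ℝ, ‖Complex.exp ((θ:ℂ)*I)‖ = 1 := fun θ =>
    Complex.norm_exp_ofReal_mul_I θ
  have habs2 : ∀ θ : ℝ, ‖Complex.exp (-(θ:ℂ)*I)‖ = 1 := by
    intro θ
    rw [show -(θ:ℂ) = ((-θ:ℝ):ℂ) by push_cast; ring]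
    exact Complex.norm_exp_ofReal_mul_I (-θ)
  have hxc : ‖(x:ℂ)‖ = x := by
    rw [Complex.norm_real, Real.norm_eq_abs, _root_.abs_of_nonneg h0]
  have hw1 : ∀ θ : ℝ, ‖Complex.exp ((θ:ℂ)*I) * x‖ < 1 := by
    intro θ; rw [norm_mul, show ‖Complex.exp ((θ:ℂ)*I)‖ = 1 from habs1 θ, hxc, one_mul]; exact h1
  have hw2 : ∀ θ : ℝ, ‖Complex.exp (-(θ:ℂ)*I) * x‖ < 1 := by
    intro θ; rw [norm_mul, show ‖Complex.exp (-(θ:ℂ)*I)‖ = 1 from habs2 θ, hxc, one_mul]; exact h1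
  set G : ℕ×ℕ → ℝ → ℂ := fun jk θ =>
    (binCoef z₁ jk.1 * binCoef z₂ jk.2 * ((x:ℂ)^jk.1 * (x:ℂ)^jk.2)) *
      (Complex.exp ((θ:ℂ)*I)^jk.1 * Complex.exp (-(θ:ℂ)*I)^jk.2) with hGdef
  have hM : Summable (fun jk : ℕ×ℕ =>
      ‖binCoef z₁ jk.1‖ * x^jk.1 * (‖binCoef z₂ jk.2‖ * x^jk.2)) :=
    (summable_binCoef_norm z₁ h1 h0).mul_of_nonneg (summable_binCoef_norm z₂ h1 h0)
      (fun _ => by positivity) (fun _ => by positivity)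
  have hnorm1 : ∀ θ : ℝ, Summable (fun j : ℕ => ‖binCoef z₁ j * (Complex.exp ((θ:ℂ)*I) * x)^j‖) := by
    intro θ
    have := summable_binCoef_norm z₁ h1 h0
    refine this.of_nonneg_of_le (fun j => norm_nonneg _) (fun j => ?_)
    rw [norm_mul, norm_pow, norm_mul, show ‖Complex.exp ((θ:ℂ)*I)‖ = 1 from habs1 θ, hxc, one_mul]
  have hnorm2 : ∀ θ : ℝ, Summable (fun k : ℕ => ‖binCoef z₂ k * (Complex.exp (-(θ:ℂ)*I) * x)^k‖) := by
    intro θ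
    have := summable_binCoef_norm z₂ h1 h0
    refine this.of_nonneg_of_le (fun j => norm_nonneg _) (fun j => ?_)
    rw [norm_mul, norm_pow, norm_mul, show ‖Complex.exp (-(θ:ℂ)*I)‖ = 1 from habs2 θ, hxc, one_mul]
  have pointwise : ∀ θ : ℝ,
      (1 - Complex.exp ((θ:ℂ)*I) * x)^(-z₁) * (1 - Complex.exp (-(θ:ℂ)*I) * x)^(-z₂)
        = ∑' jk : ℕ×ℕ, G jk θ := by
    intro θ
    have hA := hasSum_binCoef z₁ (hw1 θ)
    have hB := hasSum_binCoef z₂ (hw2 θ)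
    rw [← hA.tsum_eq, ← hB.tsum_eq]
    rw [tsum_mul_tsum_of_summable_norm (hnorm1 θ) (hnorm2 θ)]
    apply tsum_congr
    intro jk
    rw [hGdef]
    simp only
    rw [mul_pow, mul_pow]
    ring
  calc ∫ θ in (-Real.pi)..Real.pi,
      (1 - Complex.exp ((θ:ℂ)*I) * x)^(-z₁) * (1 - Complex.exp (-(θ:ℂ)*I) * x)^(-z₂)
      = ∫ θ in (-Real.pi)..Real.pi, ∑' jk : ℕ×ℕ, G jk θ :=
        intervalIntegral.integral_congr (fun θ _ => pointwise θ)
    _ = ∫ θ in Set.Ioc (-Real.pi) Real.pi, ∑' jk : ℕ×ℕ, G jk θ := integral_of_le hle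
    _ = ∑' jk : ℕ×ℕ, ∫ θ in Set.Ioc (-Real.pi) Real.pi, G jk θ := by
        have hInt : ∀ jk : ℕ×ℕ,
            MeasureTheory.Integrable (G jk)
              (MeasureTheory.volume.restrict (Set.Ioc (-Real.pi) Real.pi)) := by
          intro jk
          apply Continuous.integrableOn_Ioc
          rw [hGdef]
          apply Continuous.mul continuous_const
          apply Continuous.mul
          · exact (Complex.continuous_exp.comp (Complex.continuous_ofReal.mul continuous_const)).pow _
          · exact (Complex.continuous_exp.comp ((Complex.continuous_ofReal.neg).mul continuous_const)).pow _
        refine (integral_tsum_of_summable_integral_norm hInt ?_).symm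
        · have hGnorm : ∀ (jk : ℕ×ℕ) (θ : ℝ), ‖G jk θ‖ =
              ‖binCoef z₁ jk.1‖ * x^jk.1 * (‖binCoef z₂ jk.2‖ * x^jk.2) := by
            intro jk θ
            rw [hGdef]
            simp only [norm_mul, norm_pow, habs1 θ, habs2 θ, one_pow,
              Complex.norm_real, Real.norm_eq_abs, _root_.abs_of_nonneg h0]
            ring
          have key : ∀ jk : ℕ×ℕ, (∫ θ in Set.Ioc (-Real.pi) Real.pi, ‖G jk θ‖) =
              (2*Real.pi) * (‖binCoef z₁ jk.1‖ * x^jk.1 * (‖binCoef z₂ jk.2‖ * x^jk.2)) := by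
            intro jk
            simp_rw [hGnorm jk]
            rw [MeasureTheory.setIntegral_const, MeasureTheory.measureReal_def, Real.volume_Ioc,
              ENNReal.toReal_ofReal (by linarith), smul_eq_mul]
            ring
          simp_rw [key]
          exact hM.mul_left _
    _ = ∑' jk : ℕ×ℕ, (binCoef z₁ jk.1 * binCoef z₂ jk.2 * ((x:ℂ)^jk.1 * (x:ℂ)^jk.2)) *
          (if jk.1 = jk.2 then (2*(Real.pi:ℂ)) else 0) := by
        apply tsum_congr
        intro jk
        rw [← integral_of_le hle, hGdef]
        simp only
        rw [intervalIntegral.integral_const_mul, integral_orth' jk.1 jk.2]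
    _ = (2*(Real.pi:ℂ)) * ∑' e : ℕ, binCoef z₁ e * binCoef z₂ e * ((x:ℂ)^e * (x:ℂ)^e) := by
        set H : ℕ×ℕ → ℂ := fun jk =>
          (binCoef z₁ jk.1 * binCoef z₂ jk.2 * ((x:ℂ)^jk.1 * (x:ℂ)^jk.2)) *
            (if jk.1 = jk.2 then (2*(Real.pi:ℂ)) else 0) with hHdef
        have hH : Summable H := by
          apply Summable.of_norm
          refine (hM.mul_right (2*Real.pi)).of_nonneg_of_le
            (fun _ => norm_nonneg _) (fun jk => ?_)
          rw [hHdef]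
          simp only
          rw [norm_mul]
          have e1 : ‖binCoef z₁ jk.1 * binCoef z₂ jk.2 * ((x:ℂ)^jk.1 * (x:ℂ)^jk.2)‖
              = ‖binCoef z₁ jk.1‖ * x^jk.1 * (‖binCoef z₂ jk.2‖ * x^jk.2) := by
            simp only [norm_mul, norm_pow, Complex.norm_real, Real.norm_eq_abs,
              _root_.abs_of_nonneg h0]
            ring
          have e2 : ‖(if jk.1 = jk.2 then (2*(Real.pi:ℂ)) else 0)‖ ≤ 2*Real.pi := by
            split
            · rw [show (2*(Real.pi:ℂ)) = ((2*Real.pi : ℝ):ℂ) by push_cast; ring,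
                Complex.norm_real, Real.norm_eq_abs, _root_.abs_of_nonneg (by linarith)]
            · rw [norm_zero]; linarith
          rw [e1]
          exact mul_le_mul_of_nonneg_left e2 (by positivity)
        rw [Summable.tsum_prod' hH hH.prod_factor]
        have inner : ∀ j : ℕ, (∑' k : ℕ, H (j, k))
            = binCoef z₁ j * binCoef z₂ j * ((x:ℂ)^j * (x:ℂ)^j) * (2*(Real.pi:ℂ)) := by
          intro j
          rw [tsum_eq_single j ?_]
          · rw [hHdef]; simp
          · intro k hk
            rw [hHdef]; simp only
            rw [if_neg (fun h => hk h.symm), mul_zero]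
        calc ∑' (j : ℕ) (k : ℕ), H (j, k) = ∑' j : ℕ,
              binCoef z₁ j * binCoef z₂ j * ((x:ℂ)^j * (x:ℂ)^j) * (2*(Real.pi:ℂ)) :=
            tsum_congr inner
        _ = (2*(Real.pi:ℂ)) * ∑' e : ℕ, binCoef z₁ e * binCoef z₂ e * ((x:ℂ)^e * (x:ℂ)^e) := by
            rw [tsum_mul_right]
            ring

end Aux

/-- The generalized divisor function `d_z(n)` for a complex parameter `z`:
multiplicative, with `d_z(p^a) = z(z+1)⋯(z+a-1)/a!`. -/
noncomputable def dC (z : ℂ) (n : ℕ) : ℂ :=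
  n.factorization.prod fun _ a => (∏ i ∈ Finset.range a, (z + i)) / (Nat.factorial a)

section Main
open Finset

lemma dC_eq (z : ℂ) (n : ℕ) : dC z n = n.factorization.prod fun _ a => binCoef z a := rfl

lemma dC_one (z : ℂ) : dC z 1 = 1 := by simp [dC_eq]

lemma dC_prime_pow (z : ℂ) {p : ℕ} (hp : p.Prime) (e : ℕ) : dC z (p^e) = binCoef z e := by
  rw [dC_eq, hp.factorization_pow, Finsupp.prod_single_index]
  exact binCoef_zero z

lemma dC_mul (z : ℂ) {m n : ℕ} (h : Nat.Coprime m n) :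
    dC z (m*n) = dC z m * dC z n := by
  rcases eq_or_ne m 0 with hm | hm
  · subst hm
    rcases Nat.coprime_zero_left n |>.mp h with rfl
    simp [dC_one]
  rcases eq_or_ne n 0 with hn | hn
  · subst hn
    rcases Nat.coprime_zero_right m |>.mp h with rfl
    simp [dC_one]
  rw [dC_eq, dC_eq, dC_eq, Nat.factorization_mul_of_coprime h,
    Finsupp.prod_add_index_of_disjoint]
  simpa using h.disjoint_primeFactors

lemma dC_norm_le (z : ℂ) (K : ℕ) (hK : ‖z‖ ≤ K) (n : ℕ) :
    ‖dC z n‖ ≤ ∏ p ∈ n.primeFactors, ((n.factorization p : ℝ)+1)^K := by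
  rw [dC_eq, Finsupp.prod, norm_prod]
  rw [Nat.support_factorization]
  exact Finset.prod_le_prod (fun _ _ => norm_nonneg _)
    (fun p _ => binCoef_norm_le z K hK _)

lemma divisor_bound (K : ℕ) {ε : ℝ} (hε : 0 < ε) :
    ∃ C : ℝ, 1 ≤ C ∧ ∀ n : ℕ, n ≠ 0 →
      (∏ p ∈ n.primeFactors, ((n.factorization p : ℝ)+1)^K) ≤ C * (n:ℝ)^ε := by
  -- a uniform constant C₀ with (a+1)^K ≤ C₀ * 2^(ε a)
  have h2e : (1:ℝ) < (2:ℝ)^ε := Real.one_lt_rpow_iff_of_pos (by norm_num) |>.mpr (Or.inl ⟨by norm_num, hε⟩)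
  have h2e0 : (0:ℝ) < (2:ℝ)^ε := by linarith
  set q : ℝ := ((2:ℝ)^ε)⁻¹ with hq
  have hq0 : 0 ≤ q := by positivity
  have hq1 : q < 1 := by
    rw [hq, inv_lt_one_iff₀]; right; exact h2e
  have hsum : Summable (fun a : ℕ => ((a:ℝ)+1)^K * q^a) := summable_pow_succ K hq1 hq0
  set C₀ : ℝ := ∑' a : ℕ, ((a:ℝ)+1)^K * q^a with hC₀def
  have hub : ∀ a : ℕ, ((a:ℝ)+1)^K * q^a ≤ C₀ := fun a =>
    Summable.le_tsum hsum a (fun b _ => by positivity)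
  set C₁ : ℝ := max C₀ 1 with hC₁def
  have hC₁ : 1 ≤ C₁ := le_max_right _ _
  have claim1 : ∀ a : ℕ, ((a:ℝ)+1)^K ≤ C₁ * ((2:ℝ)^ε)^a := by
    intro a
    have h1 : ((a:ℝ)+1)^K * q^a ≤ C₁ := le_trans (hub a) (le_max_left _ _)
    have h2 : q^a * ((2:ℝ)^ε)^a = 1 := by
      rw [hq, ← mul_pow, inv_mul_cancel₀ (ne_of_gt h2e0), one_pow]
    calc ((a:ℝ)+1)^K = (((a:ℝ)+1)^K * q^a) * ((2:ℝ)^ε)^a := by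
          rw [mul_assoc, h2, mul_one]
    _ ≤ C₁ * ((2:ℝ)^ε)^a := mul_le_mul_of_nonneg_right h1 (by positivity)
  set B : ℕ := ⌈(2:ℝ)^((K:ℝ)/ε)⌉₊ with hBdef
  have claim2 : ∀ p : ℕ, 2 ≤ p → B < p → ∀ a : ℕ, ((a:ℝ)+1)^K ≤ ((p:ℝ))^(ε*(a:ℝ)) := by
    intro p hp2 hBp a
    have hp0 : (0:ℝ) ≤ (p:ℝ) := by positivity
    have hple : (2:ℝ)^((K:ℝ)/ε) ≤ (p:ℝ) := by
      calc (2:ℝ)^((K:ℝ)/ε) ≤ (B:ℕ) := Nat.le_ceil _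
      _ ≤ (p:ℝ) := by exact_mod_cast Nat.le_of_lt hBp
    have h2K : (2:ℝ)^(K:ℝ) ≤ (p:ℝ)^ε := by
      have h3 : ((2:ℝ)^((K:ℝ)/ε))^ε = (2:ℝ)^(K:ℝ) := by
        rw [← Real.rpow_mul (by norm_num : (0:ℝ) ≤ 2), div_mul_cancel₀ _ (ne_of_gt hε)]
      rw [← h3]
      exact Real.rpow_le_rpow (by positivity) hple hε.le
    have ha2 : ((a:ℝ)+1) ≤ (2:ℝ)^a := by
      have := Nat.lt_two_pow_self (n := a)
      exact_mod_cast this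
    calc ((a:ℝ)+1)^K ≤ ((2:ℝ)^a)^K := pow_le_pow_left₀ (by positivity) ha2 K
    _ = ((2:ℝ)^(K:ℝ))^a := by
        rw [Real.rpow_natCast, ← pow_mul, ← pow_mul, Nat.mul_comm]
    _ ≤ ((p:ℝ)^ε)^a := pow_le_pow_left₀ (by positivity) h2K a
    _ = ((p:ℝ))^(ε*(a:ℝ)) := by
        rw [← Real.rpow_natCast ((p:ℝ)^ε) a, ← Real.rpow_mul hp0]
  have claim3 : ∀ p : ℕ, 2 ≤ p → ∀ a : ℕ, ((a:ℝ)+1)^K ≤ C₁ * ((p:ℝ))^(ε*(a:ℝ)) := by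
    intro p hp2 a
    refine (claim1 a).trans (mul_le_mul_of_nonneg_left ?_ (by linarith))
    have h4 : ((2:ℝ)^ε)^a = (2:ℝ)^(ε*(a:ℝ)) := by
      rw [← Real.rpow_natCast ((2:ℝ)^ε) a, ← Real.rpow_mul (by norm_num : (0:ℝ) ≤ 2)]
    rw [h4]
    exact Real.rpow_le_rpow (by norm_num) (by exact_mod_cast hp2) (by positivity)
  refine ⟨C₁^(B+1), ?_, ?_⟩
  · calc (1:ℝ) = 1^(B+1) := (one_pow _).symm
    _ ≤ C₁^(B+1) := pow_le_pow_left₀ (by norm_num) hC₁ _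
  intro n hn
  have step1 : (∏ p ∈ n.primeFactors, ((n.factorization p : ℝ)+1)^K)
      ≤ ∏ p ∈ n.primeFactors,
          ((if p ≤ B then C₁ else 1) * ((p:ℝ))^(ε*(n.factorization p : ℝ))) := by
    refine Finset.prod_le_prod (fun p _ => by positivity) (fun p hp => ?_)
    have hp2 : 2 ≤ p := (Nat.prime_of_mem_primeFactors hp).two_le
    by_cases hpB : p ≤ B
    · rw [if_pos hpB]; exact claim3 p hp2 _
    · rw [if_neg hpB, one_mul]
      exact claim2 p hp2 (Nat.lt_of_not_le hpB) _
  have step2 : ∏ p ∈ n.primeFactors, ((p:ℝ))^(ε*(n.factorization p : ℝ)) = (n:ℝ)^ε := by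
    have e1 : ∀ p ∈ n.primeFactors, ((p:ℝ))^(ε*(n.factorization p : ℝ))
        = (((p^(n.factorization p) : ℕ)):ℝ)^ε := by
      intro p _
      rw [mul_comm, Real.rpow_mul (by positivity), Real.rpow_natCast]
      push_cast
      rfl
    rw [Finset.prod_congr rfl e1, Real.finset_prod_rpow _ _ (fun p _ => by positivity)]
    congr 1
    rw [← Nat.cast_prod]
    congr 1
    exact Nat.factorization_prod_pow_eq_self hn
  have step3 : (∏ p ∈ n.primeFactors, (if p ≤ B then C₁ else (1:ℝ))) ≤ C₁^(B+1) := by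
    rw [← Finset.prod_filter_mul_prod_filter_not n.primeFactors (fun p => p ≤ B)]
    have e2 : ∏ p ∈ n.primeFactors.filter (fun p => p ≤ B), (if p ≤ B then C₁ else (1:ℝ))
        = C₁^((n.primeFactors.filter (fun p => p ≤ B)).card) := by
      rw [Finset.prod_congr rfl (fun p hp => if_pos (Finset.mem_filter.mp hp).2),
        Finset.prod_const]
    have e3 : ∏ p ∈ n.primeFactors.filter (fun p => ¬ p ≤ B), (if p ≤ B then C₁ else (1:ℝ)) = 1 := by
      rw [Finset.prod_congr rfl (fun p hp => if_neg (Finset.mem_filter.mp hp).2), Finset.prod_const_one]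
    rw [e2, e3, mul_one]
    have hcard : (n.primeFactors.filter (fun p => p ≤ B)).card ≤ B+1 := by
      have hsub : n.primeFactors.filter (fun p => p ≤ B) ⊆ Finset.range (B+1) := by
        intro p hp
        exact Finset.mem_range.mpr (Nat.lt_succ_of_le (Finset.mem_filter.mp hp).2)
      calc _ ≤ (Finset.range (B+1)).card := Finset.card_le_card hsub
      _ = B+1 := Finset.card_range _
    exact pow_le_pow_right₀ hC₁ hcard
  calc (∏ p ∈ n.primeFactors, ((n.factorization p : ℝ)+1)^K)
      ≤ ∏ p ∈ n.primeFactors,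
          ((if p ≤ B then C₁ else 1) * ((p:ℝ))^(ε*(n.factorization p : ℝ))) := step1
  _ = (∏ p ∈ n.primeFactors, (if p ≤ B then C₁ else (1:ℝ)))
        * ∏ p ∈ n.primeFactors, ((p:ℝ))^(ε*(n.factorization p : ℝ)) := Finset.prod_mul_distrib
  _ ≤ C₁^(B+1) * (n:ℝ)^ε := by
      rw [step2]
      exact mul_le_mul_of_nonneg_right step3 (by positivity)


lemma summable_norm_F (z₁ z₂ : ℂ) {σ : ℝ} (hσ : 1/2 < σ) :
    Summable (fun n : ℕ => ‖dC z₁ n * dC z₂ n / (n:ℂ)^((2*σ : ℝ):ℂ)‖) := by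
  set ε : ℝ := σ - 1/2 with hεdef
  have hε : 0 < ε := by rw [hεdef]; linarith
  obtain ⟨C, hC1, hC⟩ := divisor_bound (⌈‖z₁‖⌉₊ + ⌈‖z₂‖⌉₊) hε
  have hmaj : Summable (fun n : ℕ => C * ((n:ℝ)^(σ+1/2))⁻¹) :=
    (Real.summable_nat_rpow_inv.mpr (by linarith)).mul_left C
  refine hmaj.of_nonneg_of_le (fun n => norm_nonneg _) (fun n => ?_)
  rcases eq_or_ne n 0 with rfl | hn
  · have h2σ0 : ((2*σ:ℝ):ℂ) ≠ 0 := by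
      rw [Ne, Complex.ofReal_eq_zero]; intro h; linarith
    rw [Nat.cast_zero, Complex.zero_cpow h2σ0, div_zero, norm_zero]
    positivity
  · have hn1 : (1:ℝ) ≤ (n:ℝ) := by exact_mod_cast Nat.one_le_iff_ne_zero.mpr hn
    have hn0 : (0:ℝ) < (n:ℝ) := by linarith
    have hden : ‖(n:ℂ)^((2*σ:ℝ):ℂ)‖ = (n:ℝ)^(2*σ) := by
      rw [show ((n:ℕ):ℂ) = (((n:ℝ)):ℂ) by push_cast; rfl]
      rw [Complex.norm_cpow_eq_rpow_re_of_pos hn0]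
      simp
    rw [norm_div, hden, norm_mul]
    have h1 : ‖dC z₁ n‖ * ‖dC z₂ n‖ ≤ C * (n:ℝ)^ε := by
      have b1 := dC_norm_le z₁ ⌈‖z₁‖⌉₊ (Nat.le_ceil _) n
      have b2 := dC_norm_le z₂ ⌈‖z₂‖⌉₊ (Nat.le_ceil _) n
      calc ‖dC z₁ n‖ * ‖dC z₂ n‖
          ≤ (∏ p ∈ n.primeFactors, ((n.factorization p : ℝ)+1)^(⌈‖z₁‖⌉₊))
            * (∏ p ∈ n.primeFactors, ((n.factorization p : ℝ)+1)^(⌈‖z₂‖⌉₊)) :=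
            mul_le_mul b1 b2 (norm_nonneg _)
              (Finset.prod_nonneg (fun p _ => by positivity))
      _ = ∏ p ∈ n.primeFactors, ((n.factorization p : ℝ)+1)^(⌈‖z₁‖⌉₊ + ⌈‖z₂‖⌉₊) := by
          rw [← Finset.prod_mul_distrib]
          exact Finset.prod_congr rfl (fun p _ => (pow_add _ _ _).symm)
      _ ≤ C * (n:ℝ)^ε := hC n hn
    calc ‖dC z₁ n‖ * ‖dC z₂ n‖ / (n:ℝ)^(2*σ)
        ≤ (C * (n:ℝ)^ε) / (n:ℝ)^(2*σ) := by
          exact (div_le_div_iff_of_pos_right (by positivity)).mpr h1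
      _ = C * ((n:ℝ)^(σ+1/2))⁻¹ := by
          rw [mul_div_assoc, ← Real.rpow_sub hn0]
          congr 1
          rw [show ε - 2*σ = -(σ+1/2) by rw [hεdef]; ring, Real.rpow_neg hn0.le]

theorem stmt_4 (z₁ z₂ : ℂ) (σ : ℝ) (hσ : 1 / 2 < σ) :
    ∑' n : ℕ, dC z₁ (n + 1) * dC z₂ (n + 1) / (((n : ℂ) + 1) ^ ((2 * σ : ℝ) : ℂ)) =
      ∏' p : Nat.Primes,
        (1 / (2 * (Real.pi : ℂ))) * ∫ θ in (-Real.pi)..Real.pi,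
          (1 - Complex.exp (θ * Complex.I) / ((p : ℕ) : ℂ) ^ ((σ : ℝ) : ℂ)) ^ (-z₁) *
          (1 - Complex.exp (-θ * Complex.I) / ((p : ℕ) : ℂ) ^ ((σ : ℝ) : ℂ)) ^ (-z₂) := by
  set F : ℕ → ℂ := fun n => dC z₁ n * dC z₂ n / (n:ℂ)^((2*σ : ℝ):ℂ) with hFdef
  have h2σ0 : ((2*σ:ℝ):ℂ) ≠ 0 := by
    rw [Ne, Complex.ofReal_eq_zero]; intro h; linarith
  have hF0 : F 0 = 0 := by
    rw [hFdef]; simp only [Nat.cast_zero]; rw [Complex.zero_cpow h2σ0, div_zero]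
  have hF1 : F 1 = 1 := by
    rw [hFdef]; simp only [Nat.cast_one]; rw [Complex.one_cpow, dC_one, dC_one]; norm_num
  have hmul : ∀ {m n : ℕ}, Nat.Coprime m n → F (m*n) = F m * F n := by
    intro m n h
    rcases eq_or_ne m 0 with rfl | hm
    · rcases (Nat.coprime_zero_left n).mp h with rfl
      rw [zero_mul, hF0, hF1, mul_one]
    rcases eq_or_ne n 0 with rfl | hn
    · rcases (Nat.coprime_zero_right m).mp h with rfl
      rw [one_mul, hF0, hF1, one_mul]
    have hcp : ((m*n : ℕ):ℂ)^((2*σ:ℝ):ℂ)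
        = ((m:ℕ):ℂ)^((2*σ:ℝ):ℂ) * ((n:ℕ):ℂ)^((2*σ:ℝ):ℂ) := by
      have h5 := Complex.mul_cpow_ofReal_nonneg (Nat.cast_nonneg m) (Nat.cast_nonneg n)
        ((2*σ:ℝ):ℂ)
      push_cast at h5 ⊢
      exact h5
    rw [hFdef]
    simp only
    rw [dC_mul z₁ h, dC_mul z₂ h, hcp, div_mul_div_comm]
    ring_nf
  have hsum : Summable (fun n => ‖F n‖) := summable_norm_F z₁ z₂ hσ
  have heuler := EulerProduct.eulerProduct_tprod hF1 hmul hsum hF0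
  have hLHS : (∑' n : ℕ, dC z₁ (n + 1) * dC z₂ (n + 1) / (((n : ℂ) + 1) ^ ((2 * σ : ℝ) : ℂ)))
      = ∑' n, F n := by
    have h1 : ∀ n : ℕ, dC z₁ (n+1) * dC z₂ (n+1) / (((n:ℂ)+1)^((2*σ:ℝ):ℂ)) = F (n+1) := by
      intro n
      rw [hFdef]
      simp only
      norm_num
    rw [tsum_congr h1, (Summable.tsum_eq_zero_add hsum.of_norm), hF0, zero_add]
  rw [hLHS, ← heuler]
  apply tprod_congr
  intro p
  have hp : (p:ℕ).Prime := p.2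
  have hp1 : (1:ℝ) < ((p:ℕ):ℝ) := by exact_mod_cast hp.one_lt
  have hp0 : (0:ℝ) < ((p:ℕ):ℝ) := by linarith
  set x : ℝ := ((p:ℕ):ℝ)^(-σ) with hxdef
  have hx0 : 0 ≤ x := by positivity
  have hx1 : x < 1 := Real.rpow_lt_one_of_one_lt_of_neg hp1 (by linarith)
  have hpow : ((p:ℕ):ℂ)^((σ:ℝ):ℂ) = ((((p:ℕ):ℝ)^σ : ℝ) : ℂ) := by
    rw [Complex.ofReal_cpow hp0.le]
    norm_num
  have hinv : ∀ c : ℂ, c / ((p:ℕ):ℂ)^((σ:ℝ):ℂ) = c * (x:ℂ) := by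
    intro c
    rw [hpow, div_eq_mul_inv, ← Complex.ofReal_inv]
    congr 2
    rw [hxdef, Real.rpow_neg hp0.le]
  have hFpe : ∀ e : ℕ, F ((p:ℕ)^e) = binCoef z₁ e * binCoef z₂ e * ((x:ℂ)^e * (x:ℂ)^e) := by
    intro e
    rw [hFdef]
    simp only
    rw [dC_prime_pow z₁ hp, dC_prime_pow z₂ hp]
    have hd : (((p:ℕ)^e : ℕ):ℂ)^((2*σ:ℝ):ℂ) = ((((p:ℕ):ℝ)^((e:ℝ)*(2*σ)) : ℝ):ℂ) := by
      rw [show (((p:ℕ)^e : ℕ):ℂ) = (((((p:ℕ):ℝ)^e : ℝ)):ℂ) by push_cast; ring]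
      rw [← Complex.ofReal_cpow (by positivity)]
      congr 1
      rw [← Real.rpow_natCast ((p:ℕ):ℝ) e, ← Real.rpow_mul hp0.le]
    rw [hd]
    have hval : (x:ℝ)^e * (x:ℝ)^e = ((((p:ℕ):ℝ)^((e:ℝ)*(2*σ)) : ℝ))⁻¹ := by
      rw [hxdef, ← Real.rpow_natCast (((p:ℕ):ℝ)^(-σ)) e, ← Real.rpow_mul hp0.le,
        ← Real.rpow_add hp0, ← Real.rpow_neg hp0.le]
      congr 1
      ring
    rw [div_eq_mul_inv, ← Complex.ofReal_inv, ← hval]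
    push_cast
    ring
  rw [tsum_congr hFpe]
  have hIeq : (∫ θ in (-Real.pi)..Real.pi,
      (1 - Complex.exp ((θ:ℂ) * Complex.I) / ((p:ℕ):ℂ)^((σ:ℝ):ℂ)) ^ (-z₁) *
      (1 - Complex.exp (-(θ:ℂ) * Complex.I) / ((p:ℕ):ℂ)^((σ:ℝ):ℂ)) ^ (-z₂))
      = (2*(Real.pi:ℂ)) * ∑' e : ℕ, binCoef z₁ e * binCoef z₂ e * ((x:ℂ)^e * (x:ℂ)^e) := by
    simp_rw [hinv]
    exact local_identity z₁ z₂ hx0 hx1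
  rw [hIeq]
  have hπ : ((Real.pi:ℂ)) ≠ 0 := by exact_mod_cast Real.pi_ne_zero
  rw [← mul_assoc]
  rw [show (1 / (2*(Real.pi:ℂ))) * (2*(Real.pi:ℂ)) = 1 by field_simp]
  rw [one_mul]

end Main
end

section
/- Let 1/2 < σ < 1, let T be large, let 2 ≤ y ≤ z be reals, and let k be a positive integer with k ≤ log T/(3 log z). Then (1/T) ∫_T^{2T} |∑_{y ≤ p ≤ z} p^{-σ-it}|^{2k} dt ≪ k!·(∑_{y ≤ p ≤ z} p^{-2σ})^k + O(T^{-1/3}), where the sums run over primes p. -/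
open Complex Finset List

lemma cpow_eq_exp (σ t : ℝ) (p : ℕ) (hp : 0 < p) :
    (p:ℂ) ^ (-((σ:ℂ) + t*I)) = Complex.exp (-((σ:ℂ) + t*I) * (Real.log p : ℂ)) := by
  rw [Complex.cpow_def_of_ne_zero (by exact_mod_cast hp.ne')]
  rw [← Complex.ofReal_natCast, Complex.ofReal_log (by positivity), mul_comm]

lemma expand_abs_pow (σ t : ℝ) (P : Finset ℕ) (hP : ∀ p ∈ P, 0 < p) (k : ℕ) :
    ((‖∑ p ∈ P, (p:ℂ) ^ (-((σ:ℂ) + t*I))‖)^(2*k) : ℝ)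
      = (∑ g ∈ Fintype.piFinset (fun _ : Fin k => P),
          ∑ h ∈ Fintype.piFinset (fun _ : Fin k => P),
          Complex.exp ((((-σ * ((∑ i, Real.log (g i)) + (∑ i, Real.log (h i)))) : ℝ) : ℂ)
            + (((∑ i, Real.log (h i)) - (∑ i, Real.log (g i)) : ℝ) : ℂ) * t * I)).re := by
  set w : ℂ := ∑ p ∈ P, (p:ℂ) ^ (-((σ:ℂ) + t*I)) with hw
  have key : ((‖w‖ ^ (2*k) : ℝ) : ℂ)
      = ∑ g ∈ Fintype.piFinset (fun _ : Fin k => P),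
          ∑ h ∈ Fintype.piFinset (fun _ : Fin k => P),
          Complex.exp ((((-σ * ((∑ i, Real.log (g i)) + (∑ i, Real.log (h i)))) : ℝ) : ℂ)
            + (((∑ i, Real.log (h i)) - (∑ i, Real.log (g i)) : ℝ) : ℂ) * t * I) := by
    have h1 : ((‖w‖ ^ (2*k) : ℝ) : ℂ) = w ^ k * (starRingEnd ℂ w) ^ k := by
      rw [← mul_pow, Complex.mul_conj']
      push_cast
      ring
    rw [h1]
    have hwk : w ^ k = ∑ g ∈ Fintype.piFinset (fun _ : Fin k => P),
        Complex.exp (-((σ:ℂ) + t*I) * ((∑ i, Real.log (g i) : ℝ) : ℂ)) := by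
      have : w ^ k = ∏ _i : Fin k, w := by simp
      rw [this]
      have : ∀ _i : Fin k, w = ∑ p ∈ P, Complex.exp (-((σ:ℂ) + t*I) * (Real.log p : ℂ)) := by
        intro i; rw [hw]; exact Finset.sum_congr rfl fun p hp => cpow_eq_exp σ t p (hP p hp)
      rw [Finset.prod_congr rfl (fun i _ => this i), Finset.prod_univ_sum]
      refine Finset.sum_congr rfl fun g hg => ?_
      rw [← Complex.exp_sum]
      congr 1
      rw [← Finset.mul_sum]
      congr 1
      push_cast
      rfl
    have hwck : (starRingEnd ℂ w) ^ k = ∑ h ∈ Fintype.piFinset (fun _ : Fin k => P),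
        Complex.exp (-((σ:ℂ) - t*I) * ((∑ i, Real.log (h i) : ℝ) : ℂ)) := by
      rw [← map_pow, hwk, map_sum]
      refine Finset.sum_congr rfl fun h hh => ?_
      rw [← Complex.exp_conj]
      congr 1
      simp only [map_mul, map_neg, map_add, Complex.conj_ofReal, Complex.conj_I]
      ring
    rw [hwk, hwck, Finset.sum_mul_sum]
    refine Finset.sum_congr rfl fun g hg => Finset.sum_congr rfl fun h hh => ?_
    rw [← Complex.exp_add]
    congr 1
    push_cast
    ring
  calc (‖w‖)^(2*k) = (((‖w‖ ^ (2*k) : ℝ) : ℂ)).re := by norm_cast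
    _ = _ := by rw [key]

lemma perm_of_prod_eq {k : ℕ} (g h : Fin k → ℕ) (hg : ∀ i, (g i).Prime)
    (hh : ∀ i, (h i).Prime) (hp : ∏ i, g i = ∏ i, h i) :
    ∃ π : Equiv.Perm (Fin k), h = g ∘ π := by
  have hg' : (List.ofFn g) ~ Nat.primeFactorsList (∏ i, g i) :=
    Nat.primeFactorsList_unique (by rw [List.prod_ofFn]) (by simpa using fun i => hg i)
  have hh' : (List.ofFn h) ~ Nat.primeFactorsList (∏ i, g i) :=
    Nat.primeFactorsList_unique (by rw [List.prod_ofFn, hp]) (by simpa using fun i => hh i)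
  have hper : (List.ofFn g) ~ (List.ofFn h) := hg'.trans hh'.symm
  have h1 : List.ofFn (g ∘ Tuple.sort g) ~ List.ofFn (h ∘ Tuple.sort h) :=
    ((Tuple.sort g).ofFn_comp_perm g).trans (hper.trans ((Tuple.sort h).ofFn_comp_perm h).symm)
  have heq : g ∘ Tuple.sort g = h ∘ Tuple.sort h := by
    apply List.ofFn_injective
    exact List.Perm.eq_of_sortedLE (Tuple.monotone_sort g).sortedLE_ofFn
      (Tuple.monotone_sort h).sortedLE_ofFn h1
  refine ⟨(Tuple.sort h)⁻¹.trans (Tuple.sort g), ?_⟩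
  funext x
  have := congrFun heq.symm ((Tuple.sort h)⁻¹ x)
  simpa using this

lemma card_diag {k : ℕ} (P : Finset ℕ) (hP : ∀ p ∈ P, p.Prime) (g : Fin k → ℕ)
    (hg : ∀ i, (g i).Prime) :
    ((Fintype.piFinset fun _ : Fin k => P).filter (fun h => ∏ i, h i = ∏ i, g i)).card
      ≤ k.factorial := by
  have := Finset.card_le_card_of_surjOn (s := (Finset.univ : Finset (Equiv.Perm (Fin k))))
      (t := (Fintype.piFinset fun _ : Fin k => P).filter (fun h => ∏ i, h i = ∏ i, g i))
      (fun π => g ∘ π) ?_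
  · simpa [Fintype.card_perm] using this
  · intro h hh
    simp only [Finset.coe_filter, Set.mem_setOf_eq, Fintype.mem_piFinset] at hh
    obtain ⟨hmem, hprod⟩ := hh
    obtain ⟨π, hπ⟩ := perm_of_prod_eq g h hg (fun i => hP _ (hmem i)) hprod.symm
    exact ⟨π, by simp, hπ.symm⟩

noncomputable def eTerm (σ : ℝ) {k : ℕ} (g h : Fin k → ℕ) (t : ℝ) : ℂ :=
  Complex.exp ((((-σ * ((∑ i, Real.log (g i)) + (∑ i, Real.log (h i)))) : ℝ) : ℂ)
    + (((∑ i, Real.log (h i)) - (∑ i, Real.log (g i)) : ℝ) : ℂ) * t * I)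

lemma eTerm_continuous (σ : ℝ) {k : ℕ} (g h : Fin k → ℕ) : Continuous (eTerm σ g h) := by
  unfold eTerm
  fun_prop

lemma exp_neg_mul_sum_log (σ : ℝ) {k : ℕ} (g : Fin k → ℕ) (hg : ∀ i, 0 < g i) :
    Real.exp (-σ * (∑ i, Real.log (g i))) = ∏ i, (g i : ℝ) ^ (-σ) := by
  rw [Finset.mul_sum, Real.exp_sum]
  refine Finset.prod_congr rfl fun i _ => ?_
  rw [Real.rpow_def_of_pos (by exact_mod_cast hg i), mul_comm]

lemma log_gap (m n : ℕ) (hm : 0 < m) (hmn : m < n) :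
    1 / ((m : ℝ) + 1) ≤ Real.log n - Real.log m := by
  have h1 : Real.log ((m:ℝ) / ((m:ℝ)+1)) ≤ (m:ℝ)/((m:ℝ)+1) - 1 :=
    Real.log_le_sub_one_of_pos (by positivity)
  have h2 : Real.log ((m:ℝ) / ((m:ℝ)+1)) = Real.log m - Real.log ((m:ℝ)+1) :=
    Real.log_div (by positivity) (by positivity)
  have h3 : (m:ℝ)/((m:ℝ)+1) - 1 = -(1/((m:ℝ)+1)) := by field_simp; ring
  have h4 : Real.log ((m:ℝ)+1) ≤ Real.log n := by
    apply Real.log_le_log (by positivity)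
    have : (m+1 : ℕ) ≤ n := hmn
    exact_mod_cast this
  linarith

lemma abs_integral_diag (σ T : ℝ) (hT : 0 ≤ T) {k : ℕ} (g h : Fin k → ℕ)
    (hg : ∀ i, 0 < g i)
    (hgh : (∑ i, Real.log (h i)) = (∑ i, Real.log (g i))) :
    ‖∫ t in T..(2*T), eTerm σ g h t‖ ≤ T * ∏ i, (g i : ℝ) ^ (-(2*σ)) := by
  have : ∀ t : ℝ, eTerm σ g h t
      = ((Real.exp (-σ * ((∑ i, Real.log (g i)) + (∑ i, Real.log (g i)))) : ℝ) : ℂ) := by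
    intro t
    unfold eTerm
    rw [hgh, sub_self, Complex.ofReal_zero, zero_mul, zero_mul, add_zero,
      Complex.ofReal_exp]
  rw [intervalIntegral.integral_congr (fun t _ => this t), intervalIntegral.integral_const]
  rw [show (2*T - T) = T by ring]
  rw [Complex.real_smul, norm_mul, Complex.norm_real, Complex.norm_real, Real.norm_eq_abs,
    Real.norm_eq_abs, _root_.abs_of_nonneg hT, Real.abs_exp]
  have : Real.exp (-σ * ((∑ i, Real.log (g i)) + (∑ i, Real.log (g i))))
      = ∏ i, (g i : ℝ) ^ (-(2*σ)) := by
    rw [show -σ * ((∑ i, Real.log (g i)) + (∑ i, Real.log (g i)))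
        = -(2*σ) * (∑ i, Real.log (g i)) by ring]
    exact exp_neg_mul_sum_log (2*σ) g hg
  rw [this]

lemma abs_integral_offdiag (σ T z : ℝ) {k : ℕ} (g h : Fin k → ℕ)
    (hg : ∀ i, 0 < g i) (hh : ∀ i, 0 < h i)
    (hgz : ∀ i, (g i : ℝ) ≤ z) (hhz : ∀ i, (h i : ℝ) ≤ z) (hz : 0 < z)
    (hne : ∏ i, g i ≠ ∏ i, h i) :
    ‖∫ t in T..(2*T), eTerm σ g h t‖
      ≤ 4 * z ^ k * ((∏ i, (g i : ℝ) ^ (-σ)) * (∏ i, (h i : ℝ) ^ (-σ))) := by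
  set Lg := ∑ i, Real.log (g i) with hLg
  set Lh := ∑ i, Real.log (h i) with hLh
  have hLgprod : Lg = Real.log ((∏ i, g i : ℕ) : ℝ) := by
    rw [Nat.cast_prod, Real.log_prod]
    exact fun i _ => by exact_mod_cast (hg i).ne'
  have hLhprod : Lh = Real.log ((∏ i, h i : ℕ) : ℝ) := by
    rw [Nat.cast_prod, Real.log_prod]
    exact fun i _ => by exact_mod_cast (hh i).ne'
  have hprodpos : ∀ (f : Fin k → ℕ), (∀ i, 0 < f i) → 0 < (∏ i, f i : ℕ) :=
    fun f hf => Finset.prod_pos fun i _ => hf i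
  have hprodle : ∀ (f : Fin k → ℕ), (∀ i, (f i : ℝ) ≤ z) → ((∏ i, f i : ℕ) : ℝ) ≤ z ^ k := by
    intro f hf
    rw [Nat.cast_prod]
    calc ∏ i, ((f i : ℝ)) ≤ ∏ _i : Fin k, z :=
          Finset.prod_le_prod (fun i _ => by positivity) (fun i _ => hf i)
      _ = z ^ k := by simp
  -- lower bound on |Lh - Lg|
  have hb : 1 / (2 * z ^ k) ≤ |Lh - Lg| := by
    rcases lt_or_gt_of_ne hne with hlt | hlt
    · have := log_gap _ _ (hprodpos g hg) hlt
      have hle : ((∏ i, g i : ℕ) : ℝ) + 1 ≤ 2 * z ^ k := by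
        have h1 : (1:ℝ) ≤ ((∏ i, g i : ℕ) : ℝ) := by exact_mod_cast hprodpos g hg
        have h2 := hprodle g hgz
        linarith
      have : 1 / (2 * z ^ k) ≤ Lh - Lg := by
        rw [hLgprod, hLhprod]
        refine le_trans ?_ this
        apply one_div_le_one_div_of_le (by positivity) hle
      calc 1 / (2 * z ^ k) ≤ Lh - Lg := this
        _ ≤ |Lh - Lg| := le_abs_self _
    · have := log_gap _ _ (hprodpos h hh) hlt
      have hle : ((∏ i, h i : ℕ) : ℝ) + 1 ≤ 2 * z ^ k := by
        have h1 : (1:ℝ) ≤ ((∏ i, h i : ℕ) : ℝ) := by exact_mod_cast hprodpos h hh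
        have h2 := hprodle h hhz
        linarith
      have : 1 / (2 * z ^ k) ≤ Lg - Lh := by
        rw [hLgprod, hLhprod]
        refine le_trans ?_ this
        apply one_div_le_one_div_of_le (by positivity) hle
      calc 1 / (2 * z ^ k) ≤ Lg - Lh := this
        _ ≤ |Lh - Lg| := by rw [abs_sub_comm]; exact le_abs_self _
  -- rewrite the integrand
  have hbne : ((Lh - Lg : ℝ) : ℂ) * I ≠ 0 := by
    have habs : (0:ℝ) < |Lh - Lg| := lt_of_lt_of_le (by positivity) hb
    simp only [ne_eq, mul_eq_zero, I_ne_zero, or_false, Complex.ofReal_eq_zero]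
    exact abs_pos.mp habs
  have hrw : ∀ t : ℝ, eTerm σ g h t
      = ((Real.exp (-σ * (Lg + Lh)) : ℝ) : ℂ) * Complex.exp ((((Lh - Lg : ℝ) : ℂ) * I) * t) := by
    intro t
    unfold eTerm
    rw [Complex.ofReal_exp, ← Complex.exp_add]
    congr 1
    ring
  rw [intervalIntegral.integral_congr (fun t _ => hrw t),
    intervalIntegral.integral_const_mul, integral_exp_mul_complex hbne]
  rw [norm_mul, norm_div, Complex.norm_real, Real.norm_eq_abs, Real.abs_exp]
  have habs1 : ∀ x : ℝ, ‖Complex.exp ((((Lh - Lg : ℝ) : ℂ) * I) * ((x:ℝ):ℂ))‖ = 1 := by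
    intro x
    rw [Complex.norm_exp]
    simp
  have hnum : ‖Complex.exp ((((Lh - Lg : ℝ) : ℂ) * I) * ((2*T:ℝ):ℂ))
      - Complex.exp ((((Lh - Lg : ℝ) : ℂ) * I) * ((T:ℝ):ℂ))‖ ≤ 2 := by
    rw [sub_eq_add_neg]
    refine (norm_add_le _ _).trans ?_
    rw [norm_neg, habs1 (2*T), habs1 T]
    norm_num
  have hden : ‖((Lh - Lg : ℝ) : ℂ) * I‖ = |Lh - Lg| := by
    rw [norm_mul, Complex.norm_I, mul_one, Complex.norm_real, Real.norm_eq_abs]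
  have hexpa : Real.exp (-σ * (Lg + Lh)) = (∏ i, (g i : ℝ) ^ (-σ)) * (∏ i, (h i : ℝ) ^ (-σ)) := by
    rw [show -σ * (Lg + Lh) = -σ * Lg + -σ * Lh by ring, Real.exp_add,
      hLg, hLh, exp_neg_mul_sum_log σ g hg, exp_neg_mul_sum_log σ h hh]
  rw [hden, hexpa]
  have hb' : (0:ℝ) < |Lh - Lg| := lt_of_lt_of_le (by positivity) hb
  have hinv : 1 / |Lh - Lg| ≤ 2 * z ^ k := by
    have := one_div_le_one_div_of_le (show (0:ℝ) < 1/(2*z^k) by positivity) hb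
    rwa [one_div_one_div] at this
  have hfrac : ‖Complex.exp ((((Lh - Lg : ℝ) : ℂ) * I) * ((2*T:ℝ):ℂ))
      - Complex.exp ((((Lh - Lg : ℝ) : ℂ) * I) * ((T:ℝ):ℂ))‖ / |Lh - Lg| ≤ 4 * z ^ k := by
    rw [div_eq_mul_one_div]
    calc _ ≤ 2 * (2 * z ^ k) := mul_le_mul hnum hinv (by positivity) (by norm_num)
      _ = 4 * z ^ k := by ring
  refine le_trans (mul_le_mul_of_nonneg_left hfrac (by positivity)) (le_of_eq (by ring))

lemma sum_pi_prod (P : Finset ℕ) (f : ℕ → ℝ) (k : ℕ) :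
    ∑ g ∈ Fintype.piFinset (fun _ : Fin k => P), ∏ i, f (g i) = (∑ p ∈ P, f p) ^ k := by
  rw [← Finset.prod_univ_sum]
  simp

lemma mean_value (σ T z : ℝ) (hT : 1 ≤ T) (P : Finset ℕ)
    (hP : ∀ p ∈ P, p.Prime) (hPz : ∀ p ∈ P, (p : ℝ) ≤ z)
    (hcard : (P.card : ℝ) ≤ z) (hz : 0 < z) (k : ℕ)
    (hzk : z ^ k ≤ T ^ ((1:ℝ)/3)) :
    (1 / T) * ∫ t in T..(2 * T),
        (‖∑ p ∈ P, ((p : ℂ) ^ (-((σ : ℂ) + t * Complex.I)))‖) ^ (2 * k)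
      ≤ 5 * ((Nat.factorial k : ℝ) * (∑ p ∈ P, (p : ℝ) ^ (-(2 * σ))) ^ k) := by
  have hpos : ∀ p ∈ P, 0 < p := fun p hp => (hP p hp).pos
  set Pk : Finset (Fin k → ℕ) := Fintype.piFinset (fun _ : Fin k => P) with hPk
  set S : ℝ := ∑ p ∈ P, (p : ℝ) ^ (-(2 * σ)) with hS
  set X : ℝ := ∑ p ∈ P, (p : ℝ) ^ (-σ) with hX
  have hT0 : (0:ℝ) < T := lt_of_lt_of_le one_pos hT
  have hSnn : 0 ≤ S := Finset.sum_nonneg fun p hp => Real.rpow_nonneg (by positivity) _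
  have hXnn : 0 ≤ X := Finset.sum_nonneg fun p hp => Real.rpow_nonneg (by positivity) _
  -- members of Pk
  have hPkmem : ∀ g ∈ Pk, ∀ i, g i ∈ P := by
    intro g hg i
    rw [hPk, Fintype.mem_piFinset] at hg
    exact hg i
  -- Step 1: rewrite integrand
  have hFeq : ∀ t : ℝ, (‖∑ p ∈ P, ((p : ℂ) ^ (-((σ : ℂ) + t * Complex.I)))‖) ^ (2 * k)
      = (∑ g ∈ Pk, ∑ h ∈ Pk, eTerm σ g h t).re := fun t => expand_abs_pow σ t P hpos k
  have hInt : ∀ (g h : Fin k → ℕ), IntervalIntegrable (eTerm σ g h) MeasureTheory.volume T (2*T) :=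
    fun g h => (eTerm_continuous σ g h).intervalIntegrable T (2*T)
  have hFcont : Continuous (fun t => ∑ g ∈ Pk, ∑ h ∈ Pk, eTerm σ g h t) := by
    apply continuous_finset_sum
    intro g _
    apply continuous_finset_sum
    intro h _
    exact eTerm_continuous σ g h
  have hFint : IntervalIntegrable (fun t => ∑ g ∈ Pk, ∑ h ∈ Pk, eTerm σ g h t)
      MeasureTheory.volume T (2*T) := hFcont.intervalIntegrable T (2*T)
  have step1 : (∫ t in T..(2*T),
        (‖∑ p ∈ P, ((p : ℂ) ^ (-((σ : ℂ) + t * Complex.I)))‖) ^ (2 * k))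
      = (∫ t in T..(2*T), (fun t => ∑ g ∈ Pk, ∑ h ∈ Pk, eTerm σ g h t) t).re := by
    rw [intervalIntegral.integral_congr (fun t _ => hFeq t)]
    rw [← Complex.reCLM_apply, ← ContinuousLinearMap.intervalIntegral_comp_comm _ hFint]
    rfl
  have step2 : (∫ t in T..(2*T), (fun t => ∑ g ∈ Pk, ∑ h ∈ Pk, eTerm σ g h t) t)
      = ∑ g ∈ Pk, ∑ h ∈ Pk, ∫ t in T..(2*T), eTerm σ g h t := by
    rw [intervalIntegral.integral_finset_sum (fun g _ => by
      exact (continuous_finset_sum _ fun h _ => eTerm_continuous σ g h).intervalIntegrable _ _)]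
    exact Finset.sum_congr rfl fun g _ => intervalIntegral.integral_finset_sum fun h _ => hInt g h
  have step3 : (∫ t in T..(2*T),
        (‖∑ p ∈ P, ((p : ℂ) ^ (-((σ : ℂ) + t * Complex.I)))‖) ^ (2 * k))
      ≤ ∑ g ∈ Pk, ∑ h ∈ Pk, ‖∫ t in T..(2*T), eTerm σ g h t‖ := by
    rw [step1, step2]
    refine (Complex.re_le_norm _).trans ?_
    refine (norm_sum_le _ _).trans ?_
    exact Finset.sum_le_sum fun g _ => norm_sum_le _ _
  -- bound each inner sum
  have inner_bound : ∀ g ∈ Pk, (∑ h ∈ Pk, ‖∫ t in T..(2*T), eTerm σ g h t‖)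
      ≤ (Nat.factorial k : ℝ) * (T * ∏ i, (g i : ℝ) ^ (-(2*σ)))
        + 4 * z ^ k * ((∏ i, (g i : ℝ) ^ (-σ)) * X ^ k) := by
    intro g hg
    have hgP : ∀ i, g i ∈ P := hPkmem g hg
    have hgpos : ∀ i, 0 < g i := fun i => hpos _ (hgP i)
    have hgz : ∀ i, (g i : ℝ) ≤ z := fun i => hPz _ (hgP i)
    rw [← Finset.sum_filter_add_sum_filter_not Pk (fun h => ∏ i, h i = ∏ i, g i)]
    have hdiag : (∑ h ∈ Pk.filter (fun h => ∏ i, h i = ∏ i, g i),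
          ‖∫ t in T..(2*T), eTerm σ g h t‖)
        ≤ (Nat.factorial k : ℝ) * (T * ∏ i, (g i : ℝ) ^ (-(2*σ))) := by
      have hterm : ∀ h ∈ Pk.filter (fun h => ∏ i, h i = ∏ i, g i),
          ‖∫ t in T..(2*T), eTerm σ g h t‖ ≤ T * ∏ i, (g i : ℝ) ^ (-(2*σ)) := by
        intro h hh
        rw [Finset.mem_filter] at hh
        have hhP : ∀ i, h i ∈ P := hPkmem h hh.1
        have hhpos : ∀ i, 0 < h i := fun i => hpos _ (hhP i)
        apply abs_integral_diag σ T hT0.le g h hgpos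
        have h1 : (∑ i, Real.log (h i)) = Real.log ((∏ i, h i : ℕ) : ℝ) := by
          rw [Nat.cast_prod, Real.log_prod]
          exact fun i _ => by exact_mod_cast (hhpos i).ne'
        have h2 : (∑ i, Real.log (g i)) = Real.log ((∏ i, g i : ℕ) : ℝ) := by
          rw [Nat.cast_prod, Real.log_prod]
          exact fun i _ => by exact_mod_cast (hgpos i).ne'
        rw [h1, h2, hh.2]
      calc (∑ h ∈ Pk.filter (fun h => ∏ i, h i = ∏ i, g i),
            ‖∫ t in T..(2*T), eTerm σ g h t‖)
          ≤ ∑ h ∈ Pk.filter (fun h => ∏ i, h i = ∏ i, g i), (T * ∏ i, (g i : ℝ) ^ (-(2*σ))) :=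
            Finset.sum_le_sum hterm
        _ = ((Pk.filter (fun h => ∏ i, h i = ∏ i, g i)).card : ℝ)
              * (T * ∏ i, (g i : ℝ) ^ (-(2*σ))) := by rw [Finset.sum_const, nsmul_eq_mul]
        _ ≤ (Nat.factorial k : ℝ) * (T * ∏ i, (g i : ℝ) ^ (-(2*σ))) := by
            apply mul_le_mul_of_nonneg_right
            · exact_mod_cast card_diag P hP g (fun i => hP _ (hgP i))
            · positivity
    have hoff : (∑ h ∈ Pk.filter (fun h => ¬ (∏ i, h i = ∏ i, g i)),
          ‖∫ t in T..(2*T), eTerm σ g h t‖)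
        ≤ 4 * z ^ k * ((∏ i, (g i : ℝ) ^ (-σ)) * X ^ k) := by
      have hterm : ∀ h ∈ Pk.filter (fun h => ¬ (∏ i, h i = ∏ i, g i)),
          ‖∫ t in T..(2*T), eTerm σ g h t‖
            ≤ 4 * z ^ k * ((∏ i, (g i : ℝ) ^ (-σ)) * (∏ i, (h i : ℝ) ^ (-σ))) := by
        intro h hh
        rw [Finset.mem_filter] at hh
        have hhP : ∀ i, h i ∈ P := hPkmem h hh.1
        exact abs_integral_offdiag σ T z g h hgpos (fun i => hpos _ (hhP i)) hgz
          (fun i => hPz _ (hhP i)) hz (Ne.symm hh.2)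
      calc (∑ h ∈ Pk.filter (fun h => ¬ (∏ i, h i = ∏ i, g i)),
            ‖∫ t in T..(2*T), eTerm σ g h t‖)
          ≤ ∑ h ∈ Pk.filter (fun h => ¬ (∏ i, h i = ∏ i, g i)),
              4 * z ^ k * ((∏ i, (g i : ℝ) ^ (-σ)) * (∏ i, (h i : ℝ) ^ (-σ))) :=
            Finset.sum_le_sum hterm
        _ ≤ ∑ h ∈ Pk, 4 * z ^ k * ((∏ i, (g i : ℝ) ^ (-σ)) * (∏ i, (h i : ℝ) ^ (-σ))) := by
            apply Finset.sum_le_sum_of_subset_of_nonneg (Finset.filter_subset _ _)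
            intro h _ _
            positivity
        _ = 4 * z ^ k * ((∏ i, (g i : ℝ) ^ (-σ)) * ∑ h ∈ Pk, (∏ i, (h i : ℝ) ^ (-σ))) := by
            rw [Finset.mul_sum, Finset.mul_sum]
        _ = 4 * z ^ k * ((∏ i, (g i : ℝ) ^ (-σ)) * X ^ k) := by
            rw [hX, ← sum_pi_prod P (fun p => (p:ℝ) ^ (-σ)) k]
      -- done
    exact add_le_add hdiag hoff
  -- sum over g
  have step4 : (∑ g ∈ Pk, ∑ h ∈ Pk, ‖∫ t in T..(2*T), eTerm σ g h t‖)
      ≤ (Nat.factorial k : ℝ) * T * S ^ k + 4 * z ^ k * (X ^ k * X ^ k) := by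
    calc (∑ g ∈ Pk, ∑ h ∈ Pk, ‖∫ t in T..(2*T), eTerm σ g h t‖)
        ≤ ∑ g ∈ Pk, ((Nat.factorial k : ℝ) * (T * ∏ i, (g i : ℝ) ^ (-(2*σ)))
            + 4 * z ^ k * ((∏ i, (g i : ℝ) ^ (-σ)) * X ^ k)) :=
          Finset.sum_le_sum inner_bound
      _ = (Nat.factorial k : ℝ) * T * (∑ g ∈ Pk, ∏ i, (g i : ℝ) ^ (-(2*σ)))
            + 4 * z ^ k * ((∑ g ∈ Pk, ∏ i, (g i : ℝ) ^ (-σ)) * X ^ k) := by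
          rw [Finset.sum_add_distrib, ← Finset.mul_sum, ← Finset.mul_sum]
          rw [Finset.sum_mul, ← Finset.mul_sum]
          ring_nf
          simp only [mul_comm (X ^ k)]
      _ = (Nat.factorial k : ℝ) * T * S ^ k + 4 * z ^ k * (X ^ k * X ^ k) := by
          rw [sum_pi_prod P (fun p => (p:ℝ) ^ (-(2*σ))) k,
            sum_pi_prod P (fun p => (p:ℝ) ^ (-σ)) k]
  -- Cauchy-Schwarz : X^2 ≤ card * S
  have hCS : X ^ 2 ≤ (P.card : ℝ) * S := by
    have h1 : (∑ p ∈ P, 1 * (p:ℝ) ^ (-σ)) ^ 2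
        ≤ (∑ p ∈ P, (1:ℝ) ^ 2) * ∑ p ∈ P, ((p:ℝ) ^ (-σ)) ^ 2 :=
      Finset.sum_mul_sq_le_sq_mul_sq P _ _
    simp only [one_mul, one_pow] at h1
    rw [Finset.sum_const, nsmul_eq_mul, mul_one] at h1
    refine h1.trans ?_
    apply mul_le_mul_of_nonneg_left _ (by positivity)
    apply le_of_eq
    refine Finset.sum_congr rfl fun p hp => ?_
    have hp0 : (0:ℝ) < p := by exact_mod_cast (hpos p hp)
    rw [← Real.rpow_natCast ((p:ℝ) ^ (-σ)) 2, ← Real.rpow_mul hp0.le]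
    congr 1
    push_cast
    ring
  have hzknn : (0:ℝ) < z ^ k := by positivity
  have hXXk : X ^ k * X ^ k ≤ z ^ k * S ^ k := by
    have h1 : X ^ k * X ^ k = (X ^ 2) ^ k := by ring
    have h2 : (X ^ 2) ^ k ≤ ((P.card : ℝ) * S) ^ k := pow_le_pow_left₀ (by positivity) hCS k
    have h3 : ((P.card : ℝ) * S) ^ k ≤ (z * S) ^ k := by
      apply pow_le_pow_left₀ (by positivity)
      apply mul_le_mul_of_nonneg_right hcard hSnn
    rw [h1]
    refine (h2.trans h3).trans ?_
    rw [mul_pow]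
  have step5 : (∑ g ∈ Pk, ∑ h ∈ Pk, ‖∫ t in T..(2*T), eTerm σ g h t‖)
      ≤ (Nat.factorial k : ℝ) * T * S ^ k + 4 * T ^ ((2:ℝ)/3) * S ^ k := by
    refine step4.trans ?_
    have : 4 * z ^ k * (X ^ k * X ^ k) ≤ 4 * T ^ ((2:ℝ)/3) * S ^ k := by
      calc 4 * z ^ k * (X ^ k * X ^ k) ≤ 4 * z ^ k * (z ^ k * S ^ k) := by
            apply mul_le_mul_of_nonneg_left hXXk (by positivity)
        _ = 4 * (z ^ k * z ^ k) * S ^ k := by ring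
        _ ≤ 4 * (T ^ ((1:ℝ)/3) * T ^ ((1:ℝ)/3)) * S ^ k := by
            have h4 : z ^ k * z ^ k ≤ T ^ ((1:ℝ)/3) * T ^ ((1:ℝ)/3) :=
              mul_le_mul hzk hzk hzknn.le (by positivity)
            apply mul_le_mul_of_nonneg_right _ (by positivity)
            apply mul_le_mul_of_nonneg_left h4 (by norm_num)
        _ = 4 * T ^ ((2:ℝ)/3) * S ^ k := by
            rw [← Real.rpow_add hT0]
            norm_num
    linarith
  -- conclude
  have final : (1 / T) * ((Nat.factorial k : ℝ) * T * S ^ k + 4 * T ^ ((2:ℝ)/3) * S ^ k)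
      ≤ 5 * ((Nat.factorial k : ℝ) * S ^ k) := by
    have hfact1 : (1:ℝ) ≤ (Nat.factorial k : ℝ) := by exact_mod_cast Nat.factorial_pos k
    have hTpow : T ^ ((2:ℝ)/3) ≤ T := by
      nth_rewrite 2 [← Real.rpow_one T]
      apply Real.rpow_le_rpow_of_exponent_le hT
      norm_num
    have hSk : (0:ℝ) ≤ S ^ k := pow_nonneg hSnn k
    rw [one_div, inv_mul_le_iff₀ hT0]
    have h1 : 4 * T ^ ((2:ℝ)/3) * S ^ k ≤ 4 * T * S ^ k :=
      mul_le_mul_of_nonneg_right (mul_le_mul_of_nonneg_left hTpow (by norm_num)) hSk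
    have h2 : 4 * T * S ^ k ≤ 4 * ((Nat.factorial k : ℝ) * T) * S ^ k := by
      refine mul_le_mul_of_nonneg_right ?_ hSk
      nlinarith
    have heq : T * (5 * ((Nat.factorial k : ℝ) * S ^ k))
        = (Nat.factorial k : ℝ) * T * S ^ k + 4 * ((Nat.factorial k : ℝ) * T) * S ^ k := by ring
    linarith
  calc (1 / T) * ∫ t in T..(2 * T),
        (‖∑ p ∈ P, ((p : ℂ) ^ (-((σ : ℂ) + t * Complex.I)))‖) ^ (2 * k)
      ≤ (1 / T) * ((Nat.factorial k : ℝ) * T * S ^ k + 4 * T ^ ((2:ℝ)/3) * S ^ k) := by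
        apply mul_le_mul_of_nonneg_left (step3.trans step5) (by positivity)
    _ ≤ 5 * ((Nat.factorial k : ℝ) * S ^ k) := final

theorem stmt_10 :
    ∃ C > (0 : ℝ), ∃ T₀ : ℝ, ∀ T : ℝ, T₀ ≤ T → ∀ σ : ℝ, 1 / 2 < σ → σ < 1 →
      ∀ y z : ℝ, 2 ≤ y → y ≤ z → ∀ k : ℕ, 1 ≤ k →
        (k : ℝ) ≤ Real.log T / (3 * Real.log z) →
      (1 / T) * ∫ t in T..(2 * T),
          (‖∑ p ∈ Finset.filter Nat.Prime (Finset.Icc ⌈y⌉₊ ⌊z⌋₊),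
            ((p : ℂ) ^ (-((σ : ℂ) + t * Complex.I)))‖) ^ (2 * k)
        ≤ C * ((Nat.factorial k : ℝ) *
            (∑ p ∈ Finset.filter Nat.Prime (Finset.Icc ⌈y⌉₊ ⌊z⌋₊),
              (p : ℝ) ^ (-(2 * σ))) ^ k + T ^ (-(1 / 3 : ℝ))) := by
  refine ⟨5, by norm_num, 2, ?_⟩
  intro T hT σ hσ1 hσ2 y z hy hyz k hk hkT
  set P := Finset.filter Nat.Prime (Finset.Icc ⌈y⌉₊ ⌊z⌋₊) with hPdef
  have hz2 : (2:ℝ) ≤ z := le_trans hy hyz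
  have hz0 : (0:ℝ) < z := by linarith
  have hT1 : (1:ℝ) ≤ T := by linarith
  have hT0 : (0:ℝ) < T := by linarith
  have hP : ∀ p ∈ P, p.Prime := fun p hp => (Finset.mem_filter.mp hp).2
  have hPz : ∀ p ∈ P, (p:ℝ) ≤ z := by
    intro p hp
    have h1 : p ≤ ⌊z⌋₊ := (Finset.mem_Icc.mp (Finset.mem_filter.mp hp).1).2
    calc (p:ℝ) ≤ (⌊z⌋₊ : ℝ) := by exact_mod_cast h1
      _ ≤ z := Nat.floor_le hz0.le
  have hcard : (P.card : ℝ) ≤ z := by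
    have h1 : P.card ≤ (Finset.Icc ⌈y⌉₊ ⌊z⌋₊).card := Finset.card_le_card (Finset.filter_subset _ _)
    rw [Nat.card_Icc] at h1
    have hy1 : 1 ≤ ⌈y⌉₊ := by
      rw [Nat.one_le_ceil_iff]
      linarith
    have h2 : ⌊z⌋₊ + 1 - ⌈y⌉₊ ≤ ⌊z⌋₊ := by omega
    calc (P.card : ℝ) ≤ ((⌊z⌋₊ + 1 - ⌈y⌉₊ : ℕ) : ℝ) := by exact_mod_cast h1
      _ ≤ (⌊z⌋₊ : ℝ) := by exact_mod_cast h2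
      _ ≤ z := Nat.floor_le hz0.le
  have hlogz : 0 < Real.log z := Real.log_pos (by linarith)
  have hzk : z ^ k ≤ T ^ ((1:ℝ)/3) := by
    have h1 : (k:ℝ) * (3 * Real.log z) ≤ Real.log T := by
      rwa [le_div_iff₀ (by positivity)] at hkT
    have h2 : z ^ k = Real.exp ((k:ℝ) * Real.log z) := by
      rw [← Real.rpow_natCast z k, Real.rpow_def_of_pos hz0, mul_comm]
    have h3 : T ^ ((1:ℝ)/3) = Real.exp ((1/3) * Real.log T) := by
      rw [Real.rpow_def_of_pos hT0, mul_comm]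
    rw [h2, h3]
    apply Real.exp_le_exp.mpr
    linarith
  have hmv := mean_value σ T z hT1 P hP hPz hcard hz0 k hzk
  refine hmv.trans ?_
  have hTpos : (0:ℝ) < T ^ (-(1/3 : ℝ)) := Real.rpow_pos_of_pos hT0 _
  apply mul_le_mul_of_nonneg_left _ (by norm_num : (0:ℝ) ≤ 5)
  exact le_add_of_nonneg_right hTpos.le
end

section
/- Let H be the commutative ring generated over ℤ by symbols x(n) for n ≥ 1, subject to x(1) = 1 and x(m)x(n) = ∑_{d | gcd(m,n)} x(mn/d²). Write x(n₁)···x(n_r) = ∑_{m | n₁···n_r} b_m(n₁,...,n_r) x(m). Then the integer coefficients satisfy b₁(m₁n₁,...,m_r n_r) = b₁(m₁,...,m_r)·b₁(n₁,...,n_r) whenever gcd(m₁···m_r, n₁···n_r) = 1, and b₁(p^{a₁},...,p^{a_r}) = 0 whenever a₁ + ··· + a_r is odd. -/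
/-- `heckeB L m` is the coefficient `b_m(n₁,…,n_r)` of `x(m)` in the expansion of the
product `x(n₁)⋯x(n_r)` in the Hecke ring generated by symbols `x(n)` subject to
`x(1) = 1` and `x(m)x(n) = ∑_{d ∣ gcd(m,n)} x(mn/d²)`, computed by multiplying
left to right. -/
def heckeB : List ℕ → ℕ → ℤ
  | [], m => if m = 1 then 1 else 0
  | n :: L, m => ∑ m' ∈ (L.prod).divisors,
      heckeB L m' * (((Nat.gcd n m').divisors.filter fun d => n * m' = m * (d * d)).card : ℤ)

open Finset

/-- Uniqueness of coprime factorization. -/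
lemma unique_split {x₁ x₂ y₁ y₂ : ℕ} (hx₁ : 0 < x₁) (h₁ : Nat.Coprime x₁ y₂)
    (h₂ : Nat.Coprime y₁ x₂) (e : x₁ * x₂ = y₁ * y₂) : x₁ = y₁ ∧ x₂ = y₂ := by
  have d1 : x₁ ∣ y₁ := (Nat.Coprime.dvd_of_dvd_mul_right h₁) ⟨x₂, e.symm⟩
  have d2 : y₁ ∣ x₁ := (Nat.Coprime.dvd_of_dvd_mul_right h₂) ⟨y₂, e⟩
  have hxy : x₁ = y₁ := Nat.dvd_antisymm d1 d2
  refine ⟨hxy, ?_⟩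
  subst hxy
  exact Nat.eq_of_mul_eq_mul_left hx₁ e

lemma sum_split {β : Type*} [AddCommMonoid β] {m n : ℕ} (h : Nat.Coprime m n) (f : ℕ → β) :
    ∑ k ∈ (m * n).divisors, f k = ∑ i ∈ m.divisors, ∑ j ∈ n.divisors, f (i * j) := by
  rw [Nat.divisors_mul, Finset.mul_def, Finset.sum_image, Finset.sum_product]
  rintro ⟨a1, a2⟩ ha ⟨b1, b2⟩ hb hab
  simp only [Finset.coe_product, Set.mem_prod, Finset.mem_coe, Finset.mem_product, Nat.mem_divisors] at ha hb
  have h1 : Nat.Coprime a1 b2 := Nat.Coprime.coprime_dvd_right hb.2.1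
    (Nat.Coprime.coprime_dvd_left ha.1.1 h)
  have h2 : Nat.Coprime b1 a2 := Nat.Coprime.coprime_dvd_right ha.2.1
    (Nat.Coprime.coprime_dvd_left hb.1.1 h)
  have hp : 0 < a1 := Nat.pos_of_dvd_of_pos ha.1.1 (Nat.pos_of_ne_zero ha.1.2)
  obtain ⟨e1, e2⟩ := unique_split hp h1 h2 hab
  simp [e1, e2]

lemma gcd_split {a b m₁ m₂ : ℕ} (h : Nat.Coprime (a * m₁) (b * m₂)) :
    Nat.gcd (a * b) (m₁ * m₂) = Nat.gcd a m₁ * Nat.gcd b m₂ := by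
  apply Nat.dvd_antisymm
  · set g := Nat.gcd (a * b) (m₁ * m₂) with hg
    have hgd : g ∣ (a * m₁) * (b * m₂) := by
      have : g ∣ (a * b) * (m₁ * m₂) := Dvd.dvd.mul_right (Nat.gcd_dvd_left _ _) _
      calc g ∣ (a * b) * (m₁ * m₂) := this
        _ = (a * m₁) * (b * m₂) := by ring
    have key := (Nat.gcd_mul_gcd_eq_iff_dvd_mul_of_coprime h).2 hgd
    have h1 : Nat.gcd g (a * m₁) ∣ Nat.gcd a m₁ := by
      have hu : Nat.gcd g (a * m₁) ∣ a * m₁ := Nat.gcd_dvd_right _ _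
      have hub : Nat.Coprime (Nat.gcd g (a * m₁)) b :=
        Nat.Coprime.coprime_dvd_right (dvd_mul_right b m₂)
          (Nat.Coprime.coprime_dvd_left hu h)
      have hum : Nat.Coprime (Nat.gcd g (a * m₁)) m₂ :=
        Nat.Coprime.coprime_dvd_right (dvd_mul_left m₂ b)
          (Nat.Coprime.coprime_dvd_left hu h)
      have ha : Nat.gcd g (a * m₁) ∣ a := by
        have : Nat.gcd g (a * m₁) ∣ a * b :=
          (Nat.gcd_dvd_left g _).trans (Nat.gcd_dvd_left _ _)
        exact (Nat.Coprime.dvd_of_dvd_mul_right hub) this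
      have hm : Nat.gcd g (a * m₁) ∣ m₁ := by
        have : Nat.gcd g (a * m₁) ∣ m₁ * m₂ :=
          (Nat.gcd_dvd_left g _).trans (Nat.gcd_dvd_right _ _)
        exact (Nat.Coprime.dvd_of_dvd_mul_right hum) this
      exact Nat.dvd_gcd ha hm
    have h2 : Nat.gcd g (b * m₂) ∣ Nat.gcd b m₂ := by
      have hu : Nat.gcd g (b * m₂) ∣ b * m₂ := Nat.gcd_dvd_right _ _
      have hub : Nat.Coprime (Nat.gcd g (b * m₂)) a :=
        Nat.Coprime.coprime_dvd_right (dvd_mul_right a m₁)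
          (Nat.Coprime.coprime_dvd_left hu h.symm)
      have hum : Nat.Coprime (Nat.gcd g (b * m₂)) m₁ :=
        Nat.Coprime.coprime_dvd_right (dvd_mul_left m₁ a)
          (Nat.Coprime.coprime_dvd_left hu h.symm)
      have ha : Nat.gcd g (b * m₂) ∣ b := by
        have : Nat.gcd g (b * m₂) ∣ a * b :=
          (Nat.gcd_dvd_left g _).trans (Nat.gcd_dvd_left _ _)
        exact (Nat.Coprime.dvd_of_dvd_mul_left hub) this
      have hm : Nat.gcd g (b * m₂) ∣ m₂ := by
        have : Nat.gcd g (b * m₂) ∣ m₁ * m₂ :=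
          (Nat.gcd_dvd_left g _).trans (Nat.gcd_dvd_right _ _)
        exact (Nat.Coprime.dvd_of_dvd_mul_left hum) this
      exact Nat.dvd_gcd ha hm
    calc g = Nat.gcd g (a * m₁) * Nat.gcd g (b * m₂) := key.symm
      _ ∣ Nat.gcd a m₁ * Nat.gcd b m₂ := mul_dvd_mul h1 h2
  · exact Nat.dvd_gcd
      (mul_dvd_mul (Nat.gcd_dvd_left a m₁) (Nat.gcd_dvd_left b m₂))
      (mul_dvd_mul (Nat.gcd_dvd_right a m₁) (Nat.gcd_dvd_right b m₂))

lemma prod_zipWith_mul : ∀ (M N : List ℕ), M.length = N.length →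
    (List.zipWith (· * ·) M N).prod = M.prod * N.prod
  | [], [], _ => by simp
  | a :: M, b :: N, h => by
    simp only [List.zipWith_cons_cons, List.prod_cons]
    rw [prod_zipWith_mul M N (by simpa using h)]
    ring


lemma heckeB_mul : ∀ (M N : List ℕ), M.length = N.length → (∀ n ∈ M, 0 < n) →
    (∀ n ∈ N, 0 < n) → Nat.Coprime M.prod N.prod →
    ∀ m₁ m₂ : ℕ, m₁ ∣ M.prod → m₂ ∣ N.prod →
    heckeB (List.zipWith (· * ·) M N) (m₁ * m₂) = heckeB M m₁ * heckeB N m₂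
  | [], [], _, _, _, _ => by
    intro m₁ m₂ h1 h2
    simp only [List.prod_nil, Nat.dvd_one] at h1 h2
    simp [heckeB, h1, h2]
  | a :: M, b :: N, hlen, hM, hN, hcop => by
    intro m₁ m₂ hm₁ hm₂
    have hlen' : M.length = N.length := by simpa using hlen
    have hMpos : ∀ n ∈ M, 0 < n := fun n hn => hM n (List.mem_cons_of_mem _ hn)
    have hNpos : ∀ n ∈ N, 0 < n := fun n hn => hN n (List.mem_cons_of_mem _ hn)
    have ha : 0 < a := hM a List.mem_cons_self
    have hb : 0 < b := hN b List.mem_cons_self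
    have hP' : 0 < M.prod := List.prod_pos hMpos
    have hQ' : 0 < N.prod := List.prod_pos hNpos
    simp only [List.prod_cons] at hcop hm₁ hm₂
    have hcop' : Nat.Coprime M.prod N.prod :=
      Nat.Coprime.coprime_dvd_right (dvd_mul_left _ _)
        (Nat.Coprime.coprime_dvd_left (dvd_mul_left _ _) hcop)
    have haP : a ∣ a * M.prod := dvd_mul_right a M.prod
    have hbQ : b ∣ b * N.prod := dvd_mul_right b N.prod
    have hPQ23 : Nat.Coprime ((a * M.prod) ^ 3) ((b * N.prod) ^ 3) := hcop.pow 3 3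
    simp only [List.zipWith_cons_cons, heckeB, prod_zipWith_mul M N hlen', List.prod_cons]
    rw [sum_split hcop']
    have key : ∀ m₁' ∈ M.prod.divisors, ∀ m₂' ∈ N.prod.divisors,
        heckeB (List.zipWith (· * ·) M N) (m₁' * m₂') *
          ((((a * b).gcd (m₁' * m₂')).divisors.filter
            fun d => a * b * (m₁' * m₂') = m₁ * m₂ * (d * d)).card : ℤ) =
        (heckeB M m₁' * ((a.gcd m₁').divisors.filter
            fun d => a * m₁' = m₁ * (d * d)).card) *
        (heckeB N m₂' * ((b.gcd m₂').divisors.filter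
            fun d => b * m₂' = m₂ * (d * d)).card) := by
      intro m₁' h1 m₂' h2
      rw [Nat.mem_divisors] at h1 h2
      have hm₁'P : m₁' ∣ a * M.prod := h1.1.mul_left a
      have hm₂'Q : m₂' ∣ b * N.prod := h2.1.mul_left b
      rw [heckeB_mul M N hlen' hMpos hNpos hcop' m₁' m₂' h1.1 h2.1]
      have hcab : Nat.Coprime (a * m₁') (b * m₂') :=
        Nat.Coprime.coprime_dvd_right (mul_dvd_mul hbQ hm₂'Q)
          (Nat.Coprime.coprime_dvd_left (mul_dvd_mul haP hm₁'P)
            ((hcop.mul hcop).mul_right (hcop.mul hcop)))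
      rw [gcd_split hcab]
      have hgcop : Nat.Coprime (a.gcd m₁') (b.gcd m₂') :=
        Nat.Coprime.coprime_dvd_right ((Nat.gcd_dvd_left b m₂').trans (dvd_mul_right b m₂'))
          (Nat.Coprime.coprime_dvd_left
            ((Nat.gcd_dvd_left a m₁').trans (dvd_mul_right a m₁')) hcab)
      have cardeq : ((a.gcd m₁' * b.gcd m₂').divisors.filter
            fun d => a * b * (m₁' * m₂') = m₁ * m₂ * (d * d)).card =
          ((a.gcd m₁').divisors.filter fun d => a * m₁' = m₁ * (d * d)).card *
          ((b.gcd m₂').divisors.filter fun d => b * m₂' = m₂ * (d * d)).card := by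
        rw [Finset.card_filter, Finset.card_filter, Finset.card_filter, sum_split hgcop,
          Finset.sum_mul_sum]
        refine Finset.sum_congr rfl fun d₁ hd₁ => Finset.sum_congr rfl fun d₂ hd₂ => ?_
        rw [Nat.mem_divisors] at hd₁ hd₂
        have hd₁a : d₁ ∣ a * M.prod := (hd₁.1.trans (Nat.gcd_dvd_left a m₁')).trans haP
        have hd₂b : d₂ ∣ b * N.prod := (hd₂.1.trans (Nat.gcd_dvd_left b m₂')).trans hbQ
        have hiff : (a * b * (m₁' * m₂') = m₁ * m₂ * (d₁ * d₂ * (d₁ * d₂))) ↔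
            ((a * m₁' = m₁ * (d₁ * d₁)) ∧ (b * m₂' = m₂ * (d₂ * d₂))) := by
          constructor
          · intro h
            have e : (a * m₁') * (b * m₂') = (m₁ * (d₁ * d₁)) * (m₂ * (d₂ * d₂)) := by
              rw [show (a * m₁') * (b * m₂') = a * b * (m₁' * m₂') by ring, h]; ring
            have hx1 : a * m₁' ∣ (a * M.prod) ^ 3 := by
              have h' : a * m₁' ∣ (a * M.prod) ^ 2 := by
                rw [pow_two]; exact mul_dvd_mul haP hm₁'P
              exact h'.trans (pow_dvd_pow _ (by norm_num))
            have hy2 : m₂ * (d₂ * d₂) ∣ (b * N.prod) ^ 3 := by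
              calc m₂ * (d₂ * d₂) ∣ (b * N.prod) * ((b * N.prod) * (b * N.prod)) :=
                    mul_dvd_mul hm₂ (mul_dvd_mul hd₂b hd₂b)
                _ = (b * N.prod) ^ 3 := by ring
            have hy1 : m₁ * (d₁ * d₁) ∣ (a * M.prod) ^ 3 := by
              calc m₁ * (d₁ * d₁) ∣ (a * M.prod) * ((a * M.prod) * (a * M.prod)) :=
                    mul_dvd_mul hm₁ (mul_dvd_mul hd₁a hd₁a)
                _ = (a * M.prod) ^ 3 := by ring
            have hx2 : b * m₂' ∣ (b * N.prod) ^ 3 := by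
              have h' : b * m₂' ∣ (b * N.prod) ^ 2 := by
                rw [pow_two]; exact mul_dvd_mul hbQ hm₂'Q
              exact h'.trans (pow_dvd_pow _ (by norm_num))
            have c1 : Nat.Coprime (a * m₁') (m₂ * (d₂ * d₂)) :=
              Nat.Coprime.coprime_dvd_right hy2 (Nat.Coprime.coprime_dvd_left hx1 hPQ23)
            have c2 : Nat.Coprime (m₁ * (d₁ * d₁)) (b * m₂') :=
              Nat.Coprime.coprime_dvd_right hx2 (Nat.Coprime.coprime_dvd_left hy1 hPQ23)
            have hpos : 0 < a * m₁' :=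
              Nat.mul_pos ha (Nat.pos_of_dvd_of_pos h1.1 hP')
            exact unique_split hpos c1 c2 e
          · rintro ⟨e1, e2⟩
            rw [show a * b * (m₁' * m₂') = (a * m₁') * (b * m₂') by ring, e1, e2]; ring
        rcases Classical.em (a * m₁' = m₁ * (d₁ * d₁)) with h1' | h1' <;>
          rcases Classical.em (b * m₂' = m₂ * (d₂ * d₂)) with h2' | h2' <;>
          simp [hiff, h1', h2']
      rw [cardeq]; push_cast; ring
    rw [Finset.sum_congr rfl (fun m₁' h1 => Finset.sum_congr rfl (fun m₂' h2 => key m₁' h1 m₂' h2)),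
      ← Finset.sum_mul_sum]

lemma heckeB_pow (p : ℕ) (hp : p.Prime) : ∀ (A : List ℕ) (m : ℕ),
    heckeB (A.map (p ^ ·)) m ≠ 0 → ∃ k, m = p ^ k ∧ (A.sum + k) % 2 = 0
  | [], m => by
    intro h
    simp only [List.map_nil, heckeB, ne_eq, ite_eq_right_iff, not_forall] at h
    exact ⟨0, by simpa using h.1, by simp⟩
  | a :: A, m => by
    intro h
    simp only [List.map_cons, heckeB] at h
    obtain ⟨m', hm', hne⟩ := Finset.exists_ne_zero_of_sum_ne_zero h
    have h1 : heckeB (A.map (p ^ ·)) m' ≠ 0 := fun h0 => hne (by rw [h0]; ring)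
    have h2 : (((p ^ a).gcd m').divisors.filter fun d => p ^ a * m' = m * (d * d)).card ≠ 0 := by
      intro h0; apply hne; rw [h0]; simp
    obtain ⟨k, hk, hpar⟩ := heckeB_pow p hp A m' h1
    obtain ⟨d, hd⟩ := Finset.card_pos.mp (Nat.pos_of_ne_zero h2)
    · 
      rw [Finset.mem_filter, Nat.mem_divisors] at hd
      obtain ⟨⟨hdg, _⟩, heq⟩ := hd
      have hdpa : d ∣ p ^ a := hdg.trans (Nat.gcd_dvd_left _ _)
      obtain ⟨j, _, hdj⟩ := (Nat.dvd_prime_pow hp).1 hdpa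
      subst hdj hk
      have heq' : p ^ (a + k) = m * p ^ (2 * j) := by
        rw [pow_add, heq, two_mul, pow_add]
      have hmdvd : m ∣ p ^ (a + k) := ⟨p ^ (2 * j), heq'⟩
      obtain ⟨t, _, hmt⟩ := (Nat.dvd_prime_pow hp).1 hmdvd
      subst hmt
      rw [← pow_add] at heq'
      have hexp : a + k = t + 2 * j := Nat.pow_right_injective hp.two_le heq'
      refine ⟨t, rfl, ?_⟩
      simp only [List.sum_cons]
      omega

theorem stmt_11 :
    (∀ M N : List ℕ, M.length = N.length → (∀ n ∈ M, 0 < n) → (∀ n ∈ N, 0 < n) →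
      Nat.Coprime M.prod N.prod →
      heckeB (List.zipWith (· * ·) M N) 1 = heckeB M 1 * heckeB N 1) ∧
    (∀ p : ℕ, p.Prime → ∀ A : List ℕ, Odd A.sum →
      heckeB (A.map (p ^ ·)) 1 = 0) := by
  constructor
  · intro M N hlen hM hN hcop
    have h := heckeB_mul M N hlen hM hN hcop 1 1 (one_dvd _) (one_dvd _)
    simpa using h
  · intro p hp A hodd
    by_contra h
    obtain ⟨k, hk, hpar⟩ := heckeB_pow p hp A 1 h
    have hk0 : k = 0 := by
      by_contra h0
      exact absurd hk.symm (Nat.one_lt_pow h0 hp.one_lt).ne' 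
    rw [Nat.odd_iff] at hodd
    omega
end

section
/- Let k be a positive integer, 2 ≤ y ≤ z real, and (α(p))_p real numbers indexed by primes. Then ∑_{y ≤ p₁,...,p_{2k} ≤ z} α(p₁)···α(p_{2k})·b₁(p₁,...,p_{2k}) ≤ 2^{2k}·(2k)!/k! · (∑_{y ≤ p ≤ z} α(p)²)^k, where b₁ is the coefficient of x(1) in the Hecke-ring expansion of x(p₁)···x(p_{2k}). -/
lemma heckeB_nonneg (L : List ℕ) (m : ℕ) : 0 ≤ heckeB L m := by
  induction L generalizing m with
  | nil => simp [heckeB]; positivity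
  | cons n L ih =>
    rw [heckeB]
    exact Finset.sum_nonneg fun m' _ => mul_nonneg (ih m') (by positivity)

lemma isSquare_of_mul_sq {x d : ℕ} (hd : d ≠ 0) (h : IsSquare (x * (d * d))) : IsSquare x := by
  obtain ⟨e, he⟩ := h
  have hdvd : d ∣ e := by
    have h2 : d ^ 2 ∣ e ^ 2 := by
      rw [pow_two, pow_two]
      exact ⟨x, by linarith [he]⟩
    exact (Nat.pow_dvd_pow_iff two_ne_zero).mp h2
  obtain ⟨c, rfl⟩ := hdvd
  refine ⟨c, ?_⟩
  have : (d * d) * x = (d * d) * (c * c) := by ring_nf; ring_nf at he; linarith [he]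
  exact Nat.eq_of_mul_eq_mul_left (Nat.pos_of_ne_zero (by positivity)) this

lemma heckeB_isSquare {L : List ℕ} {m : ℕ} (h : heckeB L m ≠ 0) : IsSquare (L.prod * m) := by
  induction L generalizing m with
  | nil =>
    simp only [heckeB] at h
    split at h
    · simp_all
    · simp at h
  | cons n L ih =>
    rw [heckeB] at h
    obtain ⟨m', hm', hterm⟩ := Finset.exists_ne_zero_of_sum_ne_zero h
    have h1 : heckeB L m' ≠ 0 := fun h0 => hterm (by simp [h0])
    have h2 : ((Nat.gcd n m').divisors.filter fun d => n * m' = m * (d * d)).card ≠ 0 :=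
      fun h0 => hterm (by simp [h0])
    obtain ⟨d, hd⟩ := Finset.card_ne_zero.mp h2
    simp only [Finset.mem_filter] at hd
    have hdpos : 0 < d := Nat.pos_of_mem_divisors hd.1
    have hsq : IsSquare (L.prod * m') := ih h1
    have key : IsSquare (((n :: L).prod * m) * (d * d)) := by
      obtain ⟨s, hs⟩ := hsq
      refine ⟨n * s, ?_⟩
      have : n * m' = m * (d * d) := hd.2
      simp only [List.prod_cons]
      calc n * L.prod * m * (d * d) = L.prod * (m * (d * d)) * n := by ring
        _ = L.prod * (n * m') * n := by rw [this]
        _ = (n * s) * (n * s) := by rw [show L.prod * (n * m') * n = (L.prod * m') * (n * n) by ring, hs]; ring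
    exact isSquare_of_mul_sq hdpos.ne' key

lemma inner_sum_le_two {n m' N : ℕ} (hn : n.Prime) (hN : N ≠ 0) :
    ∑ m ∈ N.divisors,
      (((Nat.gcd n m').divisors.filter fun d => n * m' = m * (d * d)).card : ℤ) ≤ 2 := by
  have swap : ∑ m ∈ N.divisors,
      (((Nat.gcd n m').divisors.filter fun d => n * m' = m * (d * d)).card : ℤ)
      = ∑ d ∈ (Nat.gcd n m').divisors,
          ((N.divisors.filter fun m => n * m' = m * (d * d)).card : ℤ) := by
    simp_rw [Finset.card_filter]
    push_cast
    rw [Finset.sum_comm]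
  rw [swap]
  have h1 : ∀ d ∈ (Nat.gcd n m').divisors,
      ((N.divisors.filter fun m => n * m' = m * (d * d)).card : ℤ) ≤ 1 := by
    intro d hd
    have hdpos : 0 < d := Nat.pos_of_mem_divisors hd
    have : (N.divisors.filter fun m => n * m' = m * (d * d)).card ≤ 1 := by
      apply Finset.card_le_one.mpr
      intro m₁ h₁ m₂ h₂
      simp only [Finset.mem_filter] at h₁ h₂
      exact Nat.eq_of_mul_eq_mul_right (by positivity) (h₁.2 ▸ h₂.2)
    exact_mod_cast this
  calc ∑ d ∈ (Nat.gcd n m').divisors,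
        ((N.divisors.filter fun m => n * m' = m * (d * d)).card : ℤ)
      ≤ ∑ _d ∈ (Nat.gcd n m').divisors, (1:ℤ) := Finset.sum_le_sum h1
    _ = ((Nat.gcd n m').divisors.card : ℤ) := by simp
    _ ≤ 2 := by
        have hsub : (Nat.gcd n m').divisors ⊆ n.divisors :=
          Nat.divisors_subset_of_dvd hn.ne_zero (Nat.gcd_dvd_left n m')
        have : (Nat.gcd n m').divisors.card ≤ n.divisors.card := Finset.card_le_card hsub
        rw [hn.divisors] at this
        have h2 : ({1, n} : Finset ℕ).card ≤ 2 := Finset.card_insert_le _ _ |>.trans (by simp)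
        exact_mod_cast this.trans h2

lemma heckeB_sum_le (L : List ℕ) (hL : ∀ p ∈ L, p.Prime) :
    ∑ m ∈ (L.prod).divisors, heckeB L m ≤ 2 ^ L.length := by
  induction L with
  | nil => simp [heckeB]
  | cons n L ih =>
    have hn : n.Prime := hL n (by simp)
    have hL' : ∀ p ∈ L, p.Prime := fun p hp => hL p (by simp [hp])
    have hprod : L.prod ≠ 0 := fun h0 =>
      Nat.not_prime_zero (hL' 0 (List.prod_eq_zero_iff.mp h0))
    have hNprod : (n :: L).prod ≠ 0 := by
      simp only [List.prod_cons]
      exact mul_ne_zero hn.ne_zero hprod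
    calc ∑ m ∈ ((n :: L).prod).divisors, heckeB (n :: L) m
        = ∑ m' ∈ (L.prod).divisors, heckeB L m' *
            ∑ m ∈ ((n :: L).prod).divisors,
              (((Nat.gcd n m').divisors.filter fun d => n * m' = m * (d * d)).card : ℤ) := by
          simp only [heckeB]
          rw [Finset.sum_comm]
          simp_rw [Finset.mul_sum]
      _ ≤ ∑ m' ∈ (L.prod).divisors, heckeB L m' * 2 := by
          apply Finset.sum_le_sum
          intro m' _
          exact mul_le_mul_of_nonneg_left (inner_sum_le_two hn hNprod) (heckeB_nonneg L m')
      _ = 2 * ∑ m' ∈ (L.prod).divisors, heckeB L m' := by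
          rw [← Finset.sum_mul, mul_comm]
      _ ≤ 2 ^ (n :: L).length := by
          have := ih hL'
          simp only [List.length_cons, pow_succ, mul_comm]
          omega

lemma heckeB_one_le (L : List ℕ) (hL : ∀ p ∈ L, p.Prime) :
    heckeB L 1 ≤ 2 ^ L.length := by
  have hprod : L.prod ≠ 0 := fun h0 =>
    Nat.not_prime_zero (hL 0 (List.prod_eq_zero_iff.mp h0))
  calc heckeB L 1 ≤ ∑ m ∈ (L.prod).divisors, heckeB L m :=
        Finset.single_le_sum (fun m _ => heckeB_nonneg L m) (Nat.one_mem_divisors.mpr hprod)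
    _ ≤ 2 ^ L.length := heckeB_sum_le L hL

def EvenFibers {n : ℕ} (f : Fin n → ℕ) : Prop :=
  ∀ v, Even ((Finset.univ.filter fun i => f i = v).card)

lemma evenFibers_of_isSquare {n : ℕ} {f : Fin n → ℕ} (hf : ∀ i, (f i).Prime)
    (h : IsSquare (∏ i, f i)) : EvenFibers f := by
  intro v
  by_cases hv : v.Prime
  · have hcard : ((Finset.univ.filter fun i => f i = v).card)
        = (∏ i, f i).factorization v := by
      rw [Nat.factorization_prod (fun i _ => (hf i).ne_zero)]
      rw [Finset.sum_apply']
      rw [Finset.card_filter]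
      apply Finset.sum_congr rfl
      intro i _
      rw [(hf i).factorization, Finsupp.single_apply]
    rw [hcard]
    obtain ⟨r, hr⟩ := h
    have hr0 : r ≠ 0 := by
      intro h0
      have : (∏ i, f i) ≠ 0 := Finset.prod_ne_zero_iff.mpr fun i _ => (hf i).ne_zero
      rw [hr, h0, mul_zero] at this
      exact this rfl
    rw [hr, Nat.factorization_mul hr0 hr0]
    simp
  · have : (Finset.univ.filter fun i => f i = v) = ∅ := by
      apply Finset.filter_eq_empty_iff.mpr
      intro i _ hiv
      exact hv (hiv ▸ hf i)
    simp [this]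

open scoped Classical in
lemma key_even (k : ℕ) (P : Finset ℕ) (β : ℕ → ℝ) (hβ : ∀ p, 0 ≤ β p) :
    ∑ f ∈ (Fintype.piFinset (fun _ : Fin (2*k) => P)).filter EvenFibers, ∏ i, β (f i)
    ≤ (((2*k).factorial : ℝ) / (k.factorial : ℝ)) * (∑ p ∈ P, β p ^ 2) ^ k := by
  induction k with
  | zero =>
    have hall : ∀ f : Fin (2*0) → ℕ, EvenFibers f := by
      intro f v
      simp [EvenFibers, Finset.univ_eq_empty]
    rw [Finset.filter_true_of_mem (fun f _ => hall f)]
    simp [Nat.factorial]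
  | succ k ih =>
    set P2 := ∑ p ∈ P, β p ^ 2 with hP2def
    have hP2 : 0 ≤ P2 := Finset.sum_nonneg fun p _ => sq_nonneg _
    -- the tail-index finder
    have hne : Nonempty (Fin (2*k+1)) := ⟨⟨0, Nat.succ_pos _⟩⟩
    let jf : (Fin (2*k+1+1) → ℕ) → Fin (2*k+1) := fun f =>
      if h : (Finset.univ.filter fun i : Fin (2*k+1) => f i.succ = f 0).Nonempty
      then (Finset.univ.filter fun i : Fin (2*k+1) => f i.succ = f 0).min' h
      else ⟨0, Nat.succ_pos _⟩
    let Φ : (Fin (2*k+1+1) → ℕ) → Fin (2*k+1) × ℕ × (Fin (2*k) → ℕ) := fun f =>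
      (jf f, f 0, fun i => f ((jf f).succAbove i).succ)
    let A : Finset (Fin (2*k+1+1) → ℕ) :=
      (Fintype.piFinset (fun _ : Fin (2*k+1+1) => P)).filter EvenFibers
    let A' : Finset (Fin (2*k) → ℕ) :=
      (Fintype.piFinset (fun _ : Fin (2*k) => P)).filter EvenFibers
    let B : Finset (Fin (2*k+1) × ℕ × (Fin (2*k) → ℕ)) := Finset.univ ×ˢ P ×ˢ A'
    let G : Fin (2*k+1) × ℕ × (Fin (2*k) → ℕ) → ℝ := fun x => β x.2.1 ^ 2 * ∏ i, β (x.2.2 i)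
    -- basic facts about f ∈ A
    have hmemA : ∀ f ∈ A, (∀ i, f i ∈ P) ∧ EvenFibers f := by
      intro f hf
      rw [Finset.mem_filter, Fintype.mem_piFinset] at hf
      exact hf
    have hjf : ∀ f ∈ A, f (jf f).succ = f 0 := by
      intro f hf
      have hEF := (hmemA f hf).2 (f 0)
      have hcardF : ((Finset.univ.filter fun i : Fin (2*k+1+1) => f i = f 0).card)
          = 1 + (Finset.univ.filter fun i : Fin (2*k+1) => f i.succ = f 0).card := by
        rw [Finset.card_filter, Finset.card_filter, Fin.sum_univ_succ]
        simp
      have hnonempty : (Finset.univ.filter fun i : Fin (2*k+1) => f i.succ = f 0).Nonempty := by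
        rw [← Finset.card_pos]
        rw [hcardF] at hEF
        rcases hEF with ⟨c, hc⟩
        omega
      have : jf f ∈ Finset.univ.filter fun i : Fin (2*k+1) => f i.succ = f 0 := by
        simp only [jf, dif_pos hnonempty]
        exact Finset.min'_mem _ _
      exact (Finset.mem_filter.mp this).2
    -- recovery
    let rec_ : Fin (2*k+1) × ℕ × (Fin (2*k) → ℕ) → (Fin (2*k+1+1) → ℕ) := fun x =>
      Fin.cons x.2.1 (x.1.insertNth x.2.1 x.2.2)
    have hrec : ∀ f ∈ A, rec_ (Φ f) = f := by
      intro f hf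
      funext i
      refine Fin.cases ?_ (fun i' => ?_) i
      · simp [rec_, Φ]
      · simp only [rec_, Φ, Fin.cons_succ]
        by_cases hi : i' = jf f
        · subst hi
          rw [Fin.insertNth_apply_same]
          exact (hjf f hf).symm
        · obtain ⟨z, hz⟩ := Fin.exists_succAbove_eq hi
          rw [← hz, Fin.insertNth_apply_succAbove]
    have hinj : Set.InjOn Φ A := by
      intro f hf g hg hfg
      rw [← hrec f hf, ← hrec g hg, hfg]
    -- product identity
    have hprodid : ∀ f ∈ A, ∏ i, β (f i) = G (Φ f) := by
      intro f hf
      have : ∏ i : Fin (2*k+1+1), β (f i)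
          = β (f 0) * ∏ i : Fin (2*k+1), β (f i.succ) := Fin.prod_univ_succ _
      rw [this, Fin.prod_univ_succAbove (fun i => β (f i.succ)) (jf f), hjf f hf]
      simp only [G, Φ]
      ring
    -- membership of the image
    have hmapsto : ∀ f ∈ A, Φ f ∈ B := by
      intro f hf
      obtain ⟨hfP, hEF⟩ := hmemA f hf
      simp only [B, Finset.mem_product, Finset.mem_univ, true_and]
      refine ⟨hfP 0, ?_⟩
      simp only [A', Finset.mem_filter, Fintype.mem_piFinset]
      refine ⟨fun i => hfP _, ?_⟩
      intro v
      beta_reduce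
      have hEFv := hEF v
      have hcardF : ((Finset.univ.filter fun i : Fin (2*k+1+1) => f i = v).card)
          = (if f 0 = v then 1 else 0) + ((if f (jf f).succ = v then 1 else 0)
            + (Finset.univ.filter fun i : Fin (2*k) => f ((jf f).succAbove i).succ = v).card) := by
        rw [Finset.card_filter, Finset.card_filter, Fin.sum_univ_succ]
        congr 1
        rw [Fin.sum_univ_succAbove (fun i : Fin (2*k+1) => if f i.succ = v then 1 else 0) (jf f)]
      rw [hjf f hf] at hcardF
      rw [Nat.even_iff] at hEFv ⊢
      rw [hcardF] at hEFv
      by_cases h0 : f 0 = v <;> simp only [Φ] <;> simp [h0] at hEFv <;> omega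
    -- the sum chain
    have step1 : ∑ f ∈ A, ∏ i, β (f i) ≤ ∑ x ∈ B, G x := by
      rw [Finset.sum_congr rfl hprodid, ← Finset.sum_image hinj]
      refine Finset.sum_le_sum_of_subset_of_nonneg ?_ ?_
      · intro x hx
        obtain ⟨f, hf, rfl⟩ := Finset.mem_image.mp hx
        exact hmapsto f hf
      · intro x _ _
        exact mul_nonneg (sq_nonneg _) (Finset.prod_nonneg fun i _ => hβ _)
    have step2 : ∑ x ∈ B, G x = (2*k+1 : ℝ) * (P2 * ∑ g ∈ A', ∏ i, β (g i)) := by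
      have inner : ∀ a : ℕ, ∑ g ∈ A', β a ^ 2 * ∏ i, β (g i)
          = β a ^ 2 * ∑ g ∈ A', ∏ i, β (g i) := fun a => (Finset.mul_sum _ _ _).symm
      calc ∑ x ∈ B, G x = ∑ _j : Fin (2*k+1), ∑ a ∈ P, ∑ g ∈ A', β a ^ 2 * ∏ i, β (g i) := by
            simp only [B, G, Finset.sum_product]
        _ = (2*k+1 : ℝ) * (P2 * ∑ g ∈ A', ∏ i, β (g i)) := by
            simp_rw [inner]
            rw [← Finset.sum_mul, ← hP2def, Finset.sum_const, nsmul_eq_mul, Finset.card_univ,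
              Fintype.card_fin]
            push_cast
            ring
    have hC : (0:ℝ) ≤ ((2*k).factorial : ℝ) / (k.factorial : ℝ) := by positivity
    have hfac : ((2*(k+1)).factorial : ℝ) / ((k+1).factorial : ℝ)
        = 2*(2*(k:ℝ)+1) * (((2*k).factorial : ℝ) / (k.factorial : ℝ)) := by
      have h1 : 2*(k+1) = (2*k+1)+1 := by ring
      have hk : ((k.factorial : ℝ)) ≠ 0 := Nat.cast_ne_zero.mpr k.factorial_ne_zero
      rw [h1, Nat.factorial_succ, Nat.factorial_succ, Nat.factorial_succ]
      push_cast
      field_simp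
      ring
    calc ∑ f ∈ (Fintype.piFinset (fun _ : Fin (2*(k+1)) => P)).filter EvenFibers, ∏ i, β (f i)
        = ∑ f ∈ A, ∏ i, β (f i) := rfl
      _ ≤ ∑ x ∈ B, G x := step1
      _ = (2*k+1 : ℝ) * (P2 * ∑ g ∈ A', ∏ i, β (g i)) := step2
      _ ≤ (2*k+1 : ℝ) * (P2 * ((((2*k).factorial : ℝ) / (k.factorial : ℝ)) * P2 ^ k)) := by
          apply mul_le_mul_of_nonneg_left _ (by positivity)
          exact mul_le_mul_of_nonneg_left ih hP2
      _ ≤ (((2*(k+1)).factorial : ℝ) / ((k+1).factorial : ℝ)) * P2 ^ (k+1) := by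
          rw [hfac]
          have hterm : (0:ℝ) ≤ (2*(k:ℝ)+1) * ((((2*k).factorial : ℝ) / (k.factorial : ℝ)) * P2 ^ (k+1)) := by
            positivity
          calc (2*(k:ℝ)+1) * (P2 * ((((2*k).factorial : ℝ) / (k.factorial : ℝ)) * P2 ^ k))
              = (2*(k:ℝ)+1) * ((((2*k).factorial : ℝ) / (k.factorial : ℝ)) * P2 ^ (k+1)) := by
                rw [pow_succ]; ring
            _ ≤ 2 * ((2*(k:ℝ)+1) * ((((2*k).factorial : ℝ) / (k.factorial : ℝ)) * P2 ^ (k+1))) := by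
                linarith [hterm]
            _ = 2*(2*(k:ℝ)+1) * (((2*k).factorial : ℝ) / (k.factorial : ℝ)) * P2 ^ (k+1) := by
                ring

theorem stmt_12 (k : ℕ) (hk : 1 ≤ k) (y z : ℝ) (hy : 2 ≤ y) (hyz : y ≤ z) (α : ℕ → ℝ) :
    ∑ f ∈ Fintype.piFinset
        (fun _ : Fin (2 * k) => Finset.filter Nat.Prime (Finset.Icc ⌈y⌉₊ ⌊z⌋₊)),
        (∏ i, α (f i)) * (heckeB (List.ofFn f) 1 : ℝ)
      ≤ 2 ^ (2 * k) * ((Nat.factorial (2 * k) : ℝ) / (Nat.factorial k : ℝ)) *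
        (∑ p ∈ Finset.filter Nat.Prime (Finset.Icc ⌈y⌉₊ ⌊z⌋₊), (α p) ^ 2) ^ k := by
  classical
  set Q := Finset.filter Nat.Prime (Finset.Icc ⌈y⌉₊ ⌊z⌋₊) with hQ
  have termwise : ∀ f ∈ Fintype.piFinset (fun _ : Fin (2 * k) => Q),
      (∏ i, α (f i)) * (heckeB (List.ofFn f) 1 : ℝ)
      ≤ 2 ^ (2 * k) * (if EvenFibers f then ∏ i, |α (f i)| else 0) := by
    intro f hf
    have hfp : ∀ i, (f i).Prime := by
      intro i
      have := Fintype.mem_piFinset.mp hf i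
      exact (Finset.mem_filter.mp this).2
    by_cases hb : heckeB (List.ofFn f) 1 = 0
    · rw [hb]
      push_cast
      rw [mul_zero]
      split
      · positivity
      · simp
    · have hsq : IsSquare (∏ i, f i) := by
        have h1 := heckeB_isSquare hb
        rwa [mul_one, List.prod_ofFn] at h1
      have hEF : EvenFibers f := evenFibers_of_isSquare hfp hsq
      rw [if_pos hEF]
      have hprodeq : ∏ i, α (f i) = ∏ i, |α (f i)| := by
        rw [Finset.prod_comp (fun v => α v) f, Finset.prod_comp (fun v => |α v|) f]
        apply Finset.prod_congr rfl
        intro v _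
        exact ((hEF v).pow_abs _).symm
      have hpn : (0:ℝ) ≤ ∏ i, |α (f i)| := Finset.prod_nonneg fun i _ => abs_nonneg _
      have hble : (heckeB (List.ofFn f) 1 : ℝ) ≤ 2 ^ (2*k) := by
        have h1 := heckeB_one_le (List.ofFn f) (by
          intro p hp
          obtain ⟨i, rfl⟩ := List.mem_ofFn.mp hp
          exact hfp i)
        rw [List.length_ofFn] at h1
        exact_mod_cast h1
      calc (∏ i, α (f i)) * (heckeB (List.ofFn f) 1 : ℝ)
          ≤ (∏ i, |α (f i)|) * 2 ^ (2*k) := by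
            rw [hprodeq]
            exact mul_le_mul_of_nonneg_left hble hpn
        _ = 2 ^ (2*k) * ∏ i, |α (f i)| := mul_comm _ _
  calc ∑ f ∈ Fintype.piFinset (fun _ : Fin (2 * k) => Q),
        (∏ i, α (f i)) * (heckeB (List.ofFn f) 1 : ℝ)
      ≤ ∑ f ∈ Fintype.piFinset (fun _ : Fin (2 * k) => Q),
        2 ^ (2 * k) * (if EvenFibers f then ∏ i, |α (f i)| else 0) :=
        Finset.sum_le_sum termwise
    _ = 2 ^ (2 * k) * ∑ f ∈ (Fintype.piFinset (fun _ : Fin (2 * k) => Q)).filter EvenFibers,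
          ∏ i, |α (f i)| := by
        rw [← Finset.mul_sum, Finset.sum_filter]
    _ ≤ 2 ^ (2 * k) * (((2*k).factorial / (k.factorial) : ℝ) * (∑ p ∈ Q, |α p| ^ 2) ^ k) := by
        apply mul_le_mul_of_nonneg_left _ (by positivity)
        exact key_even k Q (fun p => |α p|) (fun p => abs_nonneg _)
    _ = 2 ^ (2 * k) * ((Nat.factorial (2 * k) : ℝ) / (Nat.factorial k : ℝ)) *
        (∑ p ∈ Q, (α p) ^ 2) ^ k := by
        simp_rw [sq_abs]
        ring
end
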